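/- arXiv:0809.0812 — 4 statements merged into one kernel-verified Lean document; each statement's English description precedes it below -/
import Mathlib

section
/- Let f : ℝ^n → [0, ∞] be Borel measurable, finite on a set of positive Lebesgue measure, and suppose that for every u ∈ ℝ^n, f(x) ≤ (1/2)(f(x+u) + f(x−u)) holds for Lebesgue-almost every x (the exceptional null set may depend on u). Then there exists a non-empty open convex set U ⊆ ℝ^n such that f is locally essentially bounded on U. -/
open MeasureTheory Set Pointwise

private theorem aux_mcb {X : Type*} [NormedAddCommGroup X] [NormedSpace ℝ X]
    [MeasurableSpace X] [BorelSpace X] [FiniteDimensional ℝ X]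
    (μ : Measure X) [μ.IsAddHaarMeasure] [μ.InnerRegular] [SigmaFinite μ]
    (f : X → ENNReal) (hf : Measurable f)
    (hfin : 0 < μ {x | f x < ⊤})
    (hmid : ∀ u : X, ∀ᵐ x ∂μ, 2 * f x ≤ f (x + u) + f (x - u)) :
    ∃ U : Set X, IsOpen U ∧ U.Nonempty ∧ Convex ℝ U ∧
      ∃ M : ENNReal, M < ⊤ ∧ ∀ᵐ y ∂μ, y ∈ U → f y ≤ M := by
  -- Step 1: a sublevel set of positive measure
  obtain ⟨M, hM⟩ : ∃ M : ℕ, 0 < μ {x : X | f x ≤ (M : ENNReal)} := by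
    by_contra h
    push_neg at h
    simp only [le_zero_iff] at h
    have hsub : {x : X | f x < ⊤} ⊆ ⋃ M : ℕ, {x : X | f x ≤ (M : ENNReal)} := by
      intro x hx
      obtain ⟨m, hmx⟩ := ENNReal.exists_nat_gt hx.ne
      exact mem_iUnion.2 ⟨m, hmx.le⟩
    exact hfin.ne' (measure_mono_null hsub (measure_iUnion_null fun m => h m))
  set A : Set X := {x : X | f x ≤ (M : ENNReal)} with hA_def
  have hA : MeasurableSet A := hf measurableSet_Iic
  -- Step 2: find y₀ with μ (A ∩ (y₀ - ·)⁻¹' A) > 0, via Tonelli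
  obtain ⟨y₀, hy₀⟩ : ∃ y₀ : X, 0 < μ (A ∩ (fun v => y₀ - v) ⁻¹' A) := by
    by_contra h
    push_neg at h
    simp only [le_zero_iff] at h
    have hmeas : Measurable (Function.uncurry fun (y v : X) =>
        A.indicator (1 : X → ENNReal) v * A.indicator (1 : X → ENNReal) (y - v)) := by
      apply Measurable.mul
      · exact (measurable_const.indicator hA).comp measurable_snd
      · exact (measurable_const.indicator hA).comp (measurable_fst.sub measurable_snd)
    have hswap := lintegral_lintegral_swap (μ := μ) (ν := μ) hmeas.aemeasurable
    have hins : ∀ y : X, (∫⁻ v, A.indicator (1 : X → ENNReal) v * A.indicator (1 : X → ENNReal) (y - v) ∂μ)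
          = μ (A ∩ (fun v => y - v) ⁻¹' A) := by
      intro y
      rw [← lintegral_indicator_one (hA.inter ((measurable_const_sub y) hA))]
      congr 1
      ext v
      by_cases h1 : v ∈ A <;> by_cases h2 : y - v ∈ A <;>
        simp [Set.indicator_apply, h1, h2, Set.mem_inter_iff]
    have lhs0 : (∫⁻ y, ∫⁻ v, A.indicator (1 : X → ENNReal) v * A.indicator (1 : X → ENNReal) (y - v) ∂μ ∂μ) = 0 := by
      simp only [hins]
      simp [h]
    have rhs : (∫⁻ v, ∫⁻ y, A.indicator (1 : X → ENNReal) v * A.indicator (1 : X → ENNReal) (y - v) ∂μ ∂μ)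
        = μ A * μ A := by
      have : ∀ v : X, (∫⁻ y, A.indicator (1 : X → ENNReal) v * A.indicator (1 : X → ENNReal) (y - v) ∂μ)
            = A.indicator (1 : X → ENNReal) v * μ A := by
        intro v
        rw [lintegral_const_mul' _ _ (by
          by_cases hv : v ∈ A <;> simp [Set.indicator_apply, hv])]
        congr 1
        rw [lintegral_sub_right_eq_self (A.indicator (1 : X → ENNReal)) v]
        exact lintegral_indicator_one hA
      simp only [this]
      rw [lintegral_mul_const _ (measurable_one.indicator hA),
        lintegral_indicator_one hA]
    rw [lhs0, rhs] at hswap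
    exact (ENNReal.mul_pos hM.ne' hM.ne').ne' hswap.symm
  set B : Set X := A ∩ (fun v => y₀ - v) ⁻¹' A with hB_def
  have hB : MeasurableSet B := hA.inter ((measurable_const_sub y₀) hA)
  have hBsymm : ∀ v ∈ B, y₀ - v ∈ B := by
    rintro v ⟨h1, h2⟩
    exact ⟨h2, by simpa using h1⟩
  have hBA : B ⊆ A := inter_subset_left
  -- Step 3: compact closed positive-measure subset, symmetrized
  obtain ⟨K, hKB, hKcomp, hKpos⟩ : ∃ K ⊆ B, IsCompact K ∧ 0 < μ K :=
    hB.exists_lt_isCompact hy₀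
  obtain ⟨K', hK'B, hK'comp, hK'closed, hK'pos, hK'symm⟩ :
      ∃ K' ⊆ B, IsCompact K' ∧ IsClosed K' ∧ 0 < μ K' ∧ ∀ v ∈ K', y₀ - v ∈ K' := by
    refine ⟨closure K ∪ (fun v => y₀ - v) '' closure K, ?_, ?_, ?_, ?_, ?_⟩
    · apply union_subset
      · exact (hKcomp.closure_subset_measurableSet hB hKB)
      · rintro _ ⟨v, hv, rfl⟩
        exact hBsymm v (hKcomp.closure_subset_measurableSet hB hKB hv)
    · exact hKcomp.closure.union (hKcomp.closure.image (continuous_const.sub continuous_id))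
    · exact (hKcomp.closure.union
        (hKcomp.closure.image (continuous_const.sub continuous_id))).isClosed
    · exact lt_of_lt_of_le hKpos (measure_mono (subset_closure.trans subset_union_left))
    · rintro v (hv | ⟨w, hw, rfl⟩)
      · exact Or.inr ⟨v, hv, rfl⟩
      · exact Or.inl (by simpa using hw)
  clear hKB hKcomp hKpos
  -- Step 4: positive measure of (g +ᵥ K') ∩ K' for g near 0
  have hKfin : μ K' < ⊤ := hK'comp.measure_lt_top
  have hev : ∀ᶠ g in nhds (0 : X), μ ((g +ᵥ K') ∩ K') ≠ 0 := by
    filter_upwards [eventually_nhds_zero_measure_vadd_sdiff_lt hK'comp hK'closed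
      hK'pos.ne' (μ := μ)] with g hg
    intro h0'
    have h1 : μ (g +ᵥ K') = μ K' := measure_vadd μ g K'
    have h2 := measure_le_inter_add_diff μ (g +ᵥ K') K'
    rw [h1, h0', zero_add] at h2
    exact absurd (h2.trans_lt hg) (lt_irrefl _)
  -- Step 5: an open ball on which the translate intersection has positive measure
  set x₀ : X := (2⁻¹ : ℝ) • y₀ with hx₀_def
  have hφ0 : (2 : ℝ) • x₀ - y₀ = 0 := by
    rw [hx₀_def, smul_smul]
    norm_num
  have htend : Filter.Tendsto (fun x : X => (2 : ℝ) • x - y₀) (nhds x₀) (nhds 0) := by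
    have hc : Continuous fun x : X => (2 : ℝ) • x - y₀ :=
      (continuous_const_smul _).sub continuous_const
    have := hc.tendsto x₀
    rwa [hφ0] at this
  obtain ⟨r, hr, hball⟩ : ∃ r > 0, ∀ x ∈ Metric.ball x₀ r,
      μ ((((2 : ℝ) • x - y₀) +ᵥ K') ∩ K') ≠ 0 :=
    Metric.eventually_nhds_iff_ball.1 (htend.eventually hev)
  -- Step 6: swap quantifiers in hmid
  have hmeas2 : MeasurableSet {z : X × X | 2 * f z.1 ≤ f (z.1 + z.2) + f (z.1 - z.2)} := by
    apply measurableSet_le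
    · exact (measurable_const.mul (hf.comp measurable_fst))
    · exact ((hf.comp (measurable_fst.add measurable_snd)).add
        (hf.comp (measurable_fst.sub measurable_snd)))
  have hmeas2' : MeasurableSet {z : X × X | 2 * f z.2 ≤ f (z.2 + z.1) + f (z.2 - z.1)} := by
    have : {z : X × X | 2 * f z.2 ≤ f (z.2 + z.1) + f (z.2 - z.1)}
        = Prod.swap ⁻¹' {z : X × X | 2 * f z.1 ≤ f (z.1 + z.2) + f (z.1 - z.2)} := rfl
    rw [this]
    exact measurable_swap hmeas2
  have hae : ∀ᵐ x ∂μ, ∀ᵐ u ∂μ, 2 * f x ≤ f (x + u) + f (x - u) :=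
    (Measure.ae_ae_comm (μ := μ) (ν := μ)
      (p := fun u x => 2 * f x ≤ f (x + u) + f (x - u)) hmeas2').1
      (Filter.Eventually.of_forall hmid)
  -- Step 7: conclude
  refine ⟨Metric.ball x₀ r, Metric.isOpen_ball, Metric.nonempty_ball.2 hr, convex_ball x₀ r,
    (M : ENNReal), ENNReal.natCast_lt_top M, ?_⟩
  filter_upwards [hae] with x hx hxU
  set g : X := (2 : ℝ) • x - y₀ with hg_def
  have hpos : μ ((g +ᵥ K') ∩ K') ≠ 0 := hball x hxU
  have hT : μ ((fun u => x + u) ⁻¹' ((g +ᵥ K') ∩ K')) = μ ((g +ᵥ K') ∩ K') :=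
    measure_preimage_add μ x _
  obtain ⟨u, huT, hineq⟩ : ∃ u, u ∈ (fun u => x + u) ⁻¹' ((g +ᵥ K') ∩ K') ∧
      2 * f x ≤ f (x + u) + f (x - u) := by
    by_contra hcon
    push_neg at hcon
    have hsub : (fun u => x + u) ⁻¹' ((g +ᵥ K') ∩ K')
        ⊆ {u : X | ¬ (2 * f x ≤ f (x + u) + f (x - u))} := fun u hu => not_le.2 (hcon u hu)
    have := measure_mono_null hsub (ae_iff.1 hx)
    rw [hT] at this
    exact hpos this
  have hplus : x + u ∈ K' := huT.2
  have hminus : x - u ∈ K' := by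
    have h1 : x + u ∈ g +ᵥ K' := huT.1
    rw [Set.mem_vadd_set_iff_neg_vadd_mem] at h1
    have h2 : -g +ᵥ (x + u) = y₀ - (x - u) := by
      rw [hg_def, two_smul]
      simp only [vadd_eq_add]
      abel
    rw [h2] at h1
    have := hK'symm _ h1
    simpa using this
  have hfp : f (x + u) ≤ (M : ENNReal) := hBA (hK'B hplus)
  have hfm : f (x - u) ≤ (M : ENNReal) := hBA (hK'B hminus)
  have h2M : 2 * f x ≤ 2 * (M : ENNReal) := by
    calc 2 * f x ≤ f (x + u) + f (x - u) := hineq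
    _ ≤ (M : ENNReal) + (M : ENNReal) := add_le_add hfp hfm
    _ = 2 * (M : ENNReal) := (two_mul _).symm
  exact (ENNReal.mul_le_mul_iff_right two_ne_zero ENNReal.ofNat_ne_top).1 h2M

theorem midpoint_convex_locally_essentially_bounded (n : ℕ)
    (f : EuclideanSpace ℝ (Fin n) → ENNReal) (hf : Measurable f)
    (hfin : 0 < volume {x | f x < ⊤})
    (hmid : ∀ u : EuclideanSpace ℝ (Fin n),
      ∀ᵐ x ∂(volume : Measure (EuclideanSpace ℝ (Fin n))),
        2 * f x ≤ f (x + u) + f (x - u)) :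
    ∃ U : Set (EuclideanSpace ℝ (Fin n)), IsOpen U ∧ U.Nonempty ∧ Convex ℝ U ∧
      ∀ x ∈ U, ∃ V ∈ nhds x, ∃ M : ENNReal, M < ⊤ ∧
        ∀ᵐ y ∂(volume : Measure (EuclideanSpace ℝ (Fin n))), y ∈ V → f y ≤ M := by
  haveI : (volume : Measure (EuclideanSpace ℝ (Fin n))).InnerRegular := inferInstance
  obtain ⟨U, hU, hne, hconv, M, hMlt, hae⟩ := aux_mcb volume f hf hfin hmid
  exact ⟨U, hU, hne, hconv, fun x hx => ⟨U, hU.mem_nhds hx, M, hMlt, hae⟩⟩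
end

section
/- Let f : ℝ^n → [0, ∞] be Borel measurable satisfying the midpoint condition of Lemma L4 (for every u, f(x) ≤ (1/2)(f(x+u)+f(x−u)) a.e.), let U be the set of points having a neighborhood on which f is essentially bounded, and let D be the set of points x such that every neighborhood of x contains a Borel set of positive Lebesgue measure on which f is finite. Then U is open and convex, D ⊆ closure(U), and f = ∞ almost everywhere on the complement of closure(U). -/
open MeasureTheory Set Metric Filter
open scoped ENNReal Topology

namespace MidConvAux

variable {n : ℕ}

local notation "𝔼" => EuclideanSpace ℝ (Fin n)

lemma exists_mem_of_pos {S : Set 𝔼} (hS : 0 < volume S) {P : 𝔼 → Prop}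
    (hP : ∀ᵐ u : 𝔼, P u) : ∃ u ∈ S, P u := by
  by_contra h
  push_neg at h
  have hsub : S ⊆ {u | ¬ P u} := fun u hu => h u hu
  have h0 : volume {u : 𝔼 | ¬ P u} = 0 := ae_iff.1 hP
  exact hS.ne' (le_antisymm (h0 ▸ measure_mono hsub) zero_le)

lemma ae_ae_mid (f : 𝔼 → ENNReal) (hf : Measurable f)
    (hmid : ∀ u : 𝔼, ∀ᵐ x ∂(volume : Measure 𝔼), 2 * f x ≤ f (x + u) + f (x - u)) :
    ∀ᵐ x ∂(volume : Measure 𝔼), ∀ᵐ u ∂(volume : Measure 𝔼),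
      2 * f x ≤ f (x + u) + f (x - u) := by
  have hmeas : MeasurableSet {z : 𝔼 × 𝔼 | 2 * f z.1 ≤ f (z.1 + z.2) + f (z.1 - z.2)} := by
    apply measurableSet_le
    · exact measurable_const.mul (hf.comp measurable_fst)
    · exact (hf.comp (measurable_fst.add measurable_snd)).add
        (hf.comp (measurable_fst.sub measurable_snd))
  have hmeas' : MeasurableSet {z : 𝔼 × 𝔼 | 2 * f z.2 ≤ f (z.2 + z.1) + f (z.2 - z.1)} := by
    have h : {z : 𝔼 × 𝔼 | 2 * f z.2 ≤ f (z.2 + z.1) + f (z.2 - z.1)}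
        = Prod.swap ⁻¹' {z : 𝔼 × 𝔼 | 2 * f z.1 ≤ f (z.1 + z.2) + f (z.1 - z.2)} := rfl
    rw [h]; exact hmeas.preimage measurable_swap
  have h1 : ∀ᵐ z ∂((volume : Measure 𝔼).prod volume),
      2 * f z.2 ≤ f (z.2 + z.1) + f (z.2 - z.1) := by
    rw [Measure.ae_prod_iff_ae_ae hmeas']
    exact Eventually.of_forall fun u => hmid u
  have h2 : ∀ᵐ z ∂((volume : Measure 𝔼).prod volume),
      2 * f z.1 ≤ f (z.1 + z.2) + f (z.1 - z.2) := by
    rw [← Measure.prod_swap, ae_map_iff measurable_swap.aemeasurable hmeas]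
    exact h1
  exact Measure.ae_ae_of_ae_prod h2

lemma combine (f : 𝔼 → ENNReal)
    (hsw : ∀ᵐ x ∂(volume : Measure 𝔼), ∀ᵐ u ∂(volume : Measure 𝔼),
      2 * f x ≤ f (x + u) + f (x - u))
    {x y : 𝔼} {r : ℝ} {M1 M2 : ENNReal}
    (h1 : ∀ᵐ w : 𝔼, w ∈ ball x r → f w ≤ M1)
    (h2 : ∀ᵐ w : 𝔼, w ∈ ball y r → f w ≤ M2) :
    ∀ᵐ z : 𝔼, z ∈ ball (midpoint ℝ x y) r → f z ≤ (M1 + M2) / 2 := by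
  filter_upwards [hsw] with z hz hzball
  have hA : ∀ᵐ u : 𝔼, z - u ∈ ball x r → f (z - u) ≤ M1 :=
    (Measure.measurePreserving_sub_left volume z).quasiMeasurePreserving.ae h1
  have hB : ∀ᵐ u : 𝔼, z + u ∈ ball y r → f (z + u) ≤ M2 :=
    (measurePreserving_add_left volume z).quasiMeasurePreserving.ae h2
  have hr : 0 < r := pos_of_mem_ball hzball |>.trans_le' (le_refl 0) |>.trans_le (le_refl r)
  have hS : 0 < volume (ball (y - z) r ∩ ball (z - x) r) := by
    apply (isOpen_ball.inter isOpen_ball).measure_pos volume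
    have hd : dist (y - z) (z - x) < 2 * r := by
      have heq : y - z - (z - x) = (2:ℝ) • (midpoint ℝ x y - z) := by
        rw [smul_sub, two_smul, midpoint_add_self]
        module
      rw [dist_eq_norm, heq, norm_smul]
      have hz' : ‖midpoint ℝ x y - z‖ < r := by
        rw [← dist_eq_norm]
        exact mem_ball'.1 hzball
      calc ‖(2:ℝ)‖ * ‖midpoint ℝ x y - z‖ = 2 * ‖midpoint ℝ x y - z‖ := by
            norm_num
        _ < 2 * r := by linarith
    refine ⟨midpoint ℝ (y - z) (z - x), ?_, ?_⟩
    · rw [mem_ball, dist_comm, dist_left_midpoint]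
      calc ‖(2:ℝ)‖⁻¹ * dist (y - z) (z - x) = dist (y - z) (z - x) / 2 := by
            norm_num; ring
        _ < r := by linarith
    · rw [mem_ball, dist_comm, dist_right_midpoint]
      calc ‖(2:ℝ)‖⁻¹ * dist (y - z) (z - x) = dist (y - z) (z - x) / 2 := by
            norm_num; ring
        _ < r := by linarith
  obtain ⟨u, huS, hu1, hu2, hu3⟩ :
      ∃ u ∈ ball (y - z) r ∩ ball (z - x) r,
        (2 * f z ≤ f (z + u) + f (z - u)) ∧
          (z - u ∈ ball x r → f (z - u) ≤ M1) ∧ (z + u ∈ ball y r → f (z + u) ≤ M2) := by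
    obtain ⟨u, huS, h₁, h₂, h₃⟩ := exists_mem_of_pos hS (hz.and (hA.and hB))
    exact ⟨u, huS, h₁, h₂, h₃⟩
  have hzu2 : z + u ∈ ball y r := by
    have heq : dist (z + u) y = dist u (y - z) := by
      rw [dist_eq_norm, dist_eq_norm]
      congr 1
      abel
    rw [mem_ball, heq]
    exact mem_ball.1 huS.1
  have hzu1 : z - u ∈ ball x r := by
    have heq : dist (z - u) x = dist u (z - x) := by
      rw [dist_eq_norm, dist_eq_norm, ← norm_neg (u - (z - x))]
      congr 1
      abel
    rw [mem_ball, heq]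
    exact mem_ball.1 huS.2
  have key : 2 * f z ≤ M1 + M2 := by
    calc 2 * f z ≤ f (z + u) + f (z - u) := hu1
      _ ≤ M2 + M1 := add_le_add (hu3 hzu2) (hu2 hzu1)
      _ = M1 + M2 := add_comm _ _
  rw [ENNReal.le_div_iff_mul_le (Or.inl (by norm_num)) (Or.inl (by norm_num)), mul_comm]
  exact key

lemma exists_ball_bound (f : 𝔼 → ENNReal) (hf : Measurable f)
    (hsw : ∀ᵐ x ∂(volume : Measure 𝔼), ∀ᵐ u ∂(volume : Measure 𝔼),
      2 * f x ≤ f (x + u) + f (x - u))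
    {E0 : Set 𝔼} (hE0 : MeasurableSet E0) (hpos : 0 < volume E0)
    {M : ENNReal} (hbd : ∀ y ∈ E0, f y ≤ M) :
    ∃ p ∈ E0, ∃ r : ℝ, 0 < r ∧ ∀ᵐ w : 𝔼, w ∈ ball p r → f w ≤ M := by
  obtain ⟨δ, hδ0, hδ⟩ : ∃ δ : ℝ, 0 < δ ∧ (1 + δ) ^ n < 3 / 2 := by
    have hc : ContinuousAt (fun δ : ℝ => (1 + δ) ^ n) 0 := by fun_prop
    have hev : ∀ᶠ δ in 𝓝 (0:ℝ), (1 + δ) ^ n < 3 / 2 := by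
      apply hc.eventually_lt continuousAt_const
      norm_num
    obtain ⟨ε, hε, hball⟩ := Metric.eventually_nhds_iff.1 hev
    refine ⟨ε / 2, by linarith, ?_⟩
    have hd : dist (ε / 2) (0:ℝ) < ε := by
      rw [Real.dist_eq, sub_zero, abs_of_pos (by linarith)]
      linarith
    exact hball hd
  have hden := Besicovitch.ae_tendsto_measure_inter_div_of_measurableSet
    (volume : Measure 𝔼) hE0
  obtain ⟨p, hpE, hpt⟩ := exists_mem_of_pos hpos hden
  rw [Set.indicator_of_mem hpE, Pi.one_apply] at hpt
  have hev := (hpt.eventually (eventually_gt_nhds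
    (ENNReal.ofReal_lt_one.2 (by norm_num : (3:ℝ)/4 < 1)))).and self_mem_nhdsWithin
  obtain ⟨r, hratio, hr0⟩ := hev.exists
  have hv0 : volume (closedBall p r) ≠ 0 := (measure_closedBall_pos volume p hr0).ne'
  have hvt : volume (closedBall p r) ≠ ⊤ := measure_closedBall_lt_top.ne
  have hAv : ENNReal.ofReal (3/4) * volume (closedBall p r)
      < volume (E0 ∩ closedBall p r) := ENNReal.mul_lt_of_lt_div hratio
  have hC0 : volume (ball (0:𝔼) 1) ≠ 0 := (measure_ball_pos volume 0 one_pos).ne'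
  have hCt : volume (ball (0:𝔼) 1) ≠ ⊤ := measure_ball_lt_top.ne
  have hv : volume (closedBall p r) = ENNReal.ofReal (r^n) * volume (ball (0:𝔼) 1) := by
    rw [Measure.addHaar_closedBall volume _ hr0.le, finrank_euclideanSpace_fin]
  have hW : volume (closedBall (0:𝔼) (r + δ * r))
      = ENNReal.ofReal ((r + δ*r)^n) * volume (ball (0:𝔼) 1) := by
    rw [Measure.addHaar_closedBall volume _ (by positivity), finrank_euclideanSpace_fin]
  have hlt : volume (closedBall (0:𝔼) (r + δ*r))
      < ENNReal.ofReal (3/4) * volume (closedBall p r)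
        + ENNReal.ofReal (3/4) * volume (closedBall p r) := by
    have heq : ENNReal.ofReal (3/4) * volume (closedBall p r)
        + ENNReal.ofReal (3/4) * volume (closedBall p r)
        = ENNReal.ofReal (3/4 * r^n + 3/4 * r^n) * volume (ball (0:𝔼) 1) := by
      rw [hv, ENNReal.ofReal_add (by positivity) (by positivity),
        ENNReal.ofReal_mul (by norm_num : (0:ℝ) ≤ 3/4)]
      ring
    rw [heq, hW]
    have hreal : (r + δ*r)^n < 3/4 * r^n + 3/4 * r^n := by
      have h1 : (r + δ*r)^n = (1+δ)^n * r^n := by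
        rw [show r + δ*r = (1+δ)*r by ring, mul_pow]
      have h2 : (1+δ)^n * r^n < (3/2) * r^n :=
        mul_lt_mul_of_pos_right hδ (by positivity)
      rw [h1]
      linarith
    exact ENNReal.mul_lt_mul_left hC0 hCt
      ((ENNReal.ofReal_lt_ofReal_iff (by positivity)).2 hreal)
  refine ⟨p, hpE, δ * r, by positivity, ?_⟩
  filter_upwards [hsw] with z hz hzball
  set A := E0 ∩ closedBall p r with hAdef
  have hAmeas : MeasurableSet A := hE0.inter measurableSet_closedBall
  set X := (fun u : 𝔼 => z + u) ⁻¹' A with hXdef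
  set Y := (fun u : 𝔼 => z - u) ⁻¹' A with hYdef
  have hYmeas : MeasurableSet Y := hAmeas.preimage (measurable_id.const_sub z)
  have hXv : volume X = volume A := measure_preimage_add volume z A
  have hYv : volume Y = volume A :=
    (Measure.measurePreserving_sub_left volume z).measure_preimage
      hAmeas.nullMeasurableSet
  have hzp : ‖z - p‖ ≤ δ * r := by
    rw [← dist_eq_norm]
    exact (mem_ball.1 hzball).le
  have hXW : X ⊆ closedBall (0:𝔼) (r + δ * r) := by
    intro u hu
    have h1 : dist (z + u) p ≤ r := mem_closedBall.1 hu.2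
    rw [mem_closedBall, dist_zero_right]
    have h2 : u = (z + u - p) - (z - p) := by abel
    calc ‖u‖ = ‖(z + u - p) - (z - p)‖ := by rw [← h2]
      _ ≤ ‖z + u - p‖ + ‖z - p‖ := norm_sub_le _ _
      _ ≤ r + δ * r := by
          refine add_le_add ?_ hzp
          rw [← dist_eq_norm]
          exact h1
  have hYW : Y ⊆ closedBall (0:𝔼) (r + δ * r) := by
    intro u hu
    have h1 : dist (z - u) p ≤ r := mem_closedBall.1 hu.2
    rw [mem_closedBall, dist_zero_right]
    have h2 : u = (z - p) - (z - u - p) := by abel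
    calc ‖u‖ = ‖(z - p) - (z - u - p)‖ := by rw [← h2]
      _ ≤ ‖z - p‖ + ‖z - u - p‖ := norm_sub_le _ _
      _ ≤ δ * r + r := by
          refine add_le_add hzp ?_
          rw [← dist_eq_norm]
          exact h1
      _ = r + δ * r := by ring
  have hXY : 0 < volume (X ∩ Y) := by
    rw [pos_iff_ne_zero]
    intro h0
    have hunion : volume (X ∪ Y) = volume X + volume Y := by
      have h := measure_union_add_inter (μ := (volume : Measure 𝔼)) X hYmeas
      rw [h0, add_zero] at h
      exact h
    have hle : volume (X ∪ Y) ≤ volume (closedBall (0:𝔼) (r + δ * r)) :=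
      measure_mono (union_subset hXW hYW)
    have hgt : volume (closedBall (0:𝔼) (r + δ * r)) < volume X + volume Y := by
      rw [hXv, hYv]
      exact lt_of_lt_of_le hlt (add_le_add hAv.le hAv.le)
    rw [hunion] at hle
    exact absurd (lt_of_lt_of_le hgt hle) (lt_irrefl _)
  obtain ⟨u, huXY, hu⟩ := exists_mem_of_pos hXY hz
  have hfz : 2 * f z ≤ 2 * M := by
    calc 2 * f z ≤ f (z + u) + f (z - u) := hu
      _ ≤ M + M := add_le_add (hbd _ huXY.1.1) (hbd _ huXY.2.1)
      _ = 2 * M := (two_mul M).symm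
  exact (ENNReal.mul_le_mul_iff_right (by norm_num) (by norm_num)).1 hfz

lemma midpoint_coeff (x v : 𝔼) (s t : ℝ) :
    midpoint ℝ (x + s • v) (x + t • v) = x + ((s + t)/2) • v := by
  rw [midpoint_eq_smul_add, invOf_eq_inv]
  match_scalars <;> ring

lemma dyadic_mem {S : Set 𝔼} (hS : ∀ a ∈ S, ∀ b ∈ S, midpoint ℝ a b ∈ S)
    {x y : 𝔼} (hx : x ∈ S) (hy : y ∈ S) :
    ∀ k : ℕ, ∀ j : ℕ, j ≤ 2^k → x + (((j:ℝ))/2^k) • (y - x) ∈ S := by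
  intro k
  induction k with
  | zero =>
    intro j hj
    interval_cases j
    · simpa using hx
    · have h1 : (((1:ℕ):ℝ)/2^0) = (1:ℝ) := by norm_num
      rw [h1, one_smul]
      have h2 : x + (y - x) = y := by module
      rw [h2]
      exact hy
  | succ k ih =>
    intro j hj
    rcases Nat.even_or_odd j with ⟨i, hi⟩ | ⟨i, hi⟩
    · subst hi
      have hi2 : i ≤ 2^k := by
        rw [pow_succ] at hj
        omega
      have hco : ((i + i : ℕ):ℝ)/2^(k+1) = (i:ℝ)/2^k := by
        push_cast
        rw [pow_succ]
        have h2k : (0:ℝ) < 2^k := by positivity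
        field_simp
        ring
      rw [hco]
      exact ih i hi2
    · subst hi
      have hi2 : i + 1 ≤ 2^k := by
        rw [pow_succ] at hj
        omega
      have h1 := ih i (by omega)
      have h2 := ih (i+1) hi2
      have h3 := hS _ h1 _ h2
      rw [midpoint_coeff] at h3
      have hco : ((i:ℝ)/2^k + ((i+1:ℕ):ℝ)/2^k)/2 = ((2*i+1:ℕ):ℝ)/2^(k+1) := by
        push_cast
        rw [pow_succ]
        have h2k : (0:ℝ) < 2^k := by positivity
        field_simp
        ring
      rw [hco] at h3
      exact h3

end MidConvAux

theorem midpoint_convex_structure (n : ℕ)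
    (f : EuclideanSpace ℝ (Fin n) → ENNReal) (hf : Measurable f)
    (hfin : 0 < volume {x | f x < ⊤})
    (hmid : ∀ u : EuclideanSpace ℝ (Fin n),
      ∀ᵐ x ∂(volume : Measure (EuclideanSpace ℝ (Fin n))),
        2 * f x ≤ f (x + u) + f (x - u))
    (U : Set (EuclideanSpace ℝ (Fin n)))
    (hU : U = {x | ∃ V ∈ nhds x, ∃ M : ENNReal, M < ⊤ ∧
        ∀ᵐ y ∂(volume : Measure (EuclideanSpace ℝ (Fin n))), y ∈ V → f y ≤ M})
    (D : Set (EuclideanSpace ℝ (Fin n)))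
    (hD : D = {x | ∀ V ∈ nhds x, ∃ B : Set (EuclideanSpace ℝ (Fin n)),
        MeasurableSet B ∧ B ⊆ V ∧ 0 < volume B ∧ ∀ y ∈ B, f y < ⊤}) :
    IsOpen U ∧ Convex ℝ U ∧ D ⊆ closure U ∧
      ∀ᵐ x ∂(volume : Measure (EuclideanSpace ℝ (Fin n))),
        x ∉ closure U → f x = ⊤ := by
  have hsw := MidConvAux.ae_ae_mid f hf hmid
  -- every ball with an essential bound is inside U
  have hballU : ∀ (p : EuclideanSpace ℝ (Fin n)) (r : ℝ) (M : ENNReal), M < ⊤ →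
      (∀ᵐ w : EuclideanSpace ℝ (Fin n), w ∈ ball p r → f w ≤ M) → ball p r ⊆ U := by
    intro p r M hM hae q hq
    rw [hU]
    exact ⟨ball p r, isOpen_ball.mem_nhds hq, M, hM, hae⟩
  -- points of U have ball bounds
  have hUball : ∀ x ∈ U, ∃ r : ℝ, 0 < r ∧ ∃ M : ENNReal, M < ⊤ ∧
      ∀ᵐ w : EuclideanSpace ℝ (Fin n), w ∈ ball x r → f w ≤ M := by
    intro x hx
    rw [hU] at hx
    obtain ⟨V, hV, M, hM, hae⟩ := hx
    obtain ⟨r, hr, hball⟩ := Metric.mem_nhds_iff.1 hV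
    refine ⟨r, hr, M, hM, ?_⟩
    filter_upwards [hae] with w hw hwball using hw (hball hwball)
  -- U is open
  have hUopen : IsOpen U := by
    rw [isOpen_iff_mem_nhds]
    intro x hx
    obtain ⟨r, hr, M, hM, hae⟩ := hUball x hx
    exact Filter.mem_of_superset (isOpen_ball.mem_nhds (mem_ball_self hr))
      (hballU x r M hM hae)
  -- U is convex
  have hUconv : Convex ℝ U := by
    intro x hx y hy a b ha hb hab
    obtain ⟨r1, hr1, M1, hM1, hae1⟩ := hUball x hx
    obtain ⟨r2, hr2, M2, hM2, hae2⟩ := hUball y hy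
    set r := min r1 r2 with hrdef
    have hr : 0 < r := lt_min hr1 hr2
    set S : Set (EuclideanSpace ℝ (Fin n)) :=
      {z | ∃ M : ENNReal, M < ⊤ ∧ ∀ᵐ w : EuclideanSpace ℝ (Fin n),
        w ∈ ball z r → f w ≤ M} with hSdef
    have hxS : x ∈ S := by
      refine ⟨M1, hM1, ?_⟩
      filter_upwards [hae1] with w hw h using hw (ball_subset_ball (min_le_left _ _) h)
    have hyS : y ∈ S := by
      refine ⟨M2, hM2, ?_⟩
      filter_upwards [hae2] with w hw h using hw (ball_subset_ball (min_le_right _ _) h)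
    have hmidS : ∀ p ∈ S, ∀ q ∈ S, midpoint ℝ p q ∈ S := by
      rintro p ⟨Mp, hMp, hp⟩ q ⟨Mq, hMq, hq⟩
      refine ⟨(Mp + Mq)/2, ?_, MidConvAux.combine f hsw hp hq⟩
      exact ENNReal.div_lt_top (ENNReal.add_lt_top.2 ⟨hMp, hMq⟩).ne (by norm_num)
    have hdy := MidConvAux.dyadic_mem hmidS hxS hyS
    obtain rfl : a = 1 - b := by linarith
    have hpt : (1-b) • x + b • y = x + b • (y - x) := by module
    rw [hpt]
    obtain ⟨k, hk⟩ : ∃ k : ℕ, ‖y - x‖ / r < 2^k :=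
      pow_unbounded_of_one_lt _ one_lt_two
    have h2k : (0:ℝ) < 2^k := by positivity
    set j := ⌊b * 2^k⌋₊ with hjdef
    have hb1 : b ≤ 1 := by linarith
    have hj1 : (j:ℝ) ≤ b * 2^k := Nat.floor_le (by positivity)
    have hj2 : b * 2^k < j + 1 := Nat.lt_floor_add_one _
    have hjle : j ≤ 2^k := by
      have hle : b * 2^k ≤ ((2^k : ℕ):ℝ) := by
        push_cast
        nlinarith
      calc j = ⌊b * 2^k⌋₊ := rfl
        _ ≤ ⌊((2^k : ℕ):ℝ)⌋₊ := Nat.floor_le_floor hle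
        _ = 2^k := Nat.floor_natCast _
    have hjb : |b - (j:ℝ)/2^k| ≤ 1/2^k := by
      have key1 : b - (j:ℝ)/2^k = (b*2^k - j)/2^k := by
        field_simp
      rw [key1, abs_div, abs_of_pos h2k]
      have habs : |b*2^k - (j:ℝ)| ≤ 1 := abs_le.2 ⟨by linarith, by linarith⟩
      gcongr
    obtain ⟨M', hM', hae'⟩ := hdy k j hjle
    have hd : dist (x + b • (y-x)) (x + ((j:ℝ)/2^k) • (y-x)) < r := by
      rw [dist_eq_norm]
      have heq : (x + b•(y-x)) - (x + ((j:ℝ)/2^k)•(y-x)) = (b - (j:ℝ)/2^k) • (y-x) := by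
        module
      rw [heq, norm_smul, Real.norm_eq_abs]
      have hnx : ‖y - x‖ < 2^k * r := (div_lt_iff₀ hr).1 hk
      calc |b - (j:ℝ)/2^k| * ‖y-x‖ ≤ (1/2^k) * ‖y-x‖ :=
            mul_le_mul_of_nonneg_right hjb (norm_nonneg _)
        _ < (1/2^k) * (2^k * r) := by
            apply mul_lt_mul_of_pos_left _ (by positivity)
            by_cases hyx : ‖y - x‖ < 2^k * r
            · exact hyx
            · exact absurd hnx hyx
        _ = r := by field_simp
    exact hballU _ r M' hM' hae' (mem_ball.2 hd)
  -- decomposition helper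
  have hdecomp : ∀ B : Set (EuclideanSpace ℝ (Fin n)), MeasurableSet B →
      0 < volume B → (∀ y ∈ B, f y < ⊤) →
      ∃ k : ℕ, 0 < volume (B ∩ {y | f y ≤ (k:ENNReal)}) := by
    intro B hBmeas hBpos hBfin
    by_contra h
    push_neg at h
    simp only [le_zero_iff] at h
    have hBun : B ⊆ ⋃ k : ℕ, B ∩ {y | f y ≤ (k:ENNReal)} := by
      intro y hy
      obtain ⟨k, hk⟩ := ENNReal.exists_nat_gt (hBfin y hy).ne
      exact mem_iUnion.2 ⟨k, hy, hk.le⟩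
    have h0 : volume (⋃ k : ℕ, B ∩ {y | f y ≤ (k:ENNReal)}) = 0 :=
      measure_iUnion_null h
    exact hBpos.ne' (le_antisymm (h0 ▸ measure_mono hBun) zero_le)
  -- D ⊆ closure U
  have hDcl : D ⊆ closure U := by
    intro x hx
    rw [hD] at hx
    rw [mem_closure_iff_nhds]
    intro V hV
    obtain ⟨B, hBmeas, hBV, hBpos, hBfin⟩ := hx V hV
    obtain ⟨k, hk⟩ := hdecomp B hBmeas hBpos hBfin
    have hmeas : MeasurableSet (B ∩ {y | f y ≤ (k:ENNReal)}) :=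
      hBmeas.inter (hf measurableSet_Iic)
    obtain ⟨p, hp, r, hr, hae⟩ := MidConvAux.exists_ball_bound f hf hsw hmeas hk
      (fun y hy => hy.2)
    exact ⟨p, hBV hp.1, hballU p r k (ENNReal.natCast_lt_top k) hae (mem_ball_self hr)⟩
  -- a.e. infinite off closure U
  refine ⟨hUopen, hUconv, hDcl, ?_⟩
  have hnull : volume {x : EuclideanSpace ℝ (Fin n) | x ∉ closure U ∧ f x < ⊤} = 0 := by
    by_contra h0
    have hpos : 0 < volume {x : EuclideanSpace ℝ (Fin n) | x ∉ closure U ∧ f x < ⊤} :=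
      pos_iff_ne_zero.2 h0
    have hmeasT : MeasurableSet {x : EuclideanSpace ℝ (Fin n) | x ∉ closure U ∧ f x < ⊤} := by
      have h1 : MeasurableSet (closure U)ᶜ := isClosed_closure.measurableSet.compl
      have h2 : MeasurableSet {x : EuclideanSpace ℝ (Fin n) | f x < ⊤} :=
        hf measurableSet_Iio
      exact h1.inter h2
    obtain ⟨k, hk⟩ := hdecomp _ hmeasT hpos (fun y hy => hy.2)
    have hmeask : MeasurableSet ({x : EuclideanSpace ℝ (Fin n) | x ∉ closure U ∧ f x < ⊤}
        ∩ {y | f y ≤ (k:ENNReal)}) := hmeasT.inter (hf measurableSet_Iic)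
    obtain ⟨p, hp, r, hr, hae⟩ := MidConvAux.exists_ball_bound f hf hsw hmeask hk
      (fun y hy => hy.2)
    have hpU : p ∈ U := hballU p r k (ENNReal.natCast_lt_top k) hae (mem_ball_self hr)
    exact hp.1.1 (subset_closure hpU)
  rw [ae_iff]
  convert hnull using 2
  ext x
  simp only [mem_setOf_eq, lt_top_iff_ne_top]
  exact Classical.not_imp
end

section
/- Let a ∈ [0,1], let μ_n be the standard Gaussian measure on ℝ^n written as product of standard Gaussians on ℝ^k × ℝ^{n−k}, and let G : ℝ^n → [0,∞) be bounded such that (x, z) ↦ exp(−(a/2)(|x|² + |z|²)) G(x, z) is log-concave on ℝ^k × ℝ^{n−k}. Then x ↦ exp(−(a/2)|x|²) ∫ G(x,z) dμ(z) is log-concave on ℝ^k, where μ is standard Gaussian on ℝ^{n−k}. -/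
open MeasureTheory Set

/-- The standard Gaussian measure on `ℝ^m`. -/
noncomputable def stdGaussian (m : ℕ) : Measure (EuclideanSpace ℝ (Fin m)) :=
  (volume : Measure (EuclideanSpace ℝ (Fin m))).withDensity
    (fun x => ENNReal.ofReal ((2 * Real.pi) ^ (-(m : ℝ) / 2) * Real.exp (-‖x‖ ^ 2 / 2)))

section PLAux
open Pointwise
open scoped ENNReal NNReal

lemma vol_image_add_right (s : Set ℝ) (b : ℝ) : volume ((· + b) '' s) = volume s := by
  have h : (· + b) '' s = (· + (-b)) ⁻¹' s := by
    ext x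
    simp only [Set.mem_image, Set.mem_preimage]
    constructor
    · rintro ⟨a, ha, rfl⟩; simpa using ha
    · intro hx; exact ⟨x + (-b), hx, by ring⟩
  rw [h, measure_preimage_add_right volume (-b) s]

lemma compact_sum_vol {K L : Set ℝ} (hK : IsCompact K) (hL : IsCompact L)
    (hKne : K.Nonempty) (hLne : L.Nonempty) :
    volume K + volume L ≤ volume (K + L) := by
  set X := (· + sInf L) '' K with hX
  set Y := (· + sSup K) '' L with hY
  have hXsub : X ⊆ K + L := by
    rintro x ⟨a, ha, rfl⟩
    exact Set.add_mem_add ha (hL.sInf_mem hLne)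
  have hYsub : Y ⊆ K + L := by
    rintro y ⟨b, hb, rfl⟩
    have h := Set.add_mem_add (hK.sSup_mem hKne) hb
    have e : sSup K + b = b + sSup K := add_comm _ _
    rwa [e] at h
  have hInter : X ∩ Y ⊆ {sSup K + sInf L} := by
    rintro x ⟨⟨a, ha, rfl⟩, ⟨b, hb, hbx⟩⟩
    simp only at hbx
    have h1 : a ≤ sSup K := le_csSup hK.bddAbove ha
    have h2 : sInf L ≤ b := csInf_le hL.bddBelow hb
    have : a + sInf L = sSup K + sInf L := by linarith
    simpa using this
  have hYm : MeasurableSet Y :=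
    ((hL.image (continuous_add_right (sSup K)))).measurableSet
  have key : volume (X ∪ Y) + volume (X ∩ Y) = volume X + volume Y :=
    measure_union_add_inter X hYm
  have hI0 : volume (X ∩ Y) = 0 :=
    le_antisymm (le_trans (measure_mono hInter) (by simp)) zero_le
  calc volume K + volume L = volume X + volume Y := by
        rw [hX, hY, vol_image_add_right, vol_image_add_right]
      _ = volume (X ∪ Y) := by rw [← key, hI0, add_zero]
      _ ≤ volume (K + L) := measure_mono (Set.union_subset hXsub hYsub)

lemma vol_le_vol_add_left {A B : Set ℝ} (hAne : A.Nonempty) :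
    volume B ≤ volume (A + B) := by
  rcases hAne with ⟨a0, ha0⟩
  have h : (· + a0) '' B ⊆ A + B := by
    rintro x ⟨b, hb, rfl⟩
    have h := Set.add_mem_add ha0 hb
    have e : a0 + b = b + a0 := add_comm _ _
    rwa [e] at h
  calc volume B = volume ((· + a0) '' B) := (vol_image_add_right B a0).symm
    _ ≤ volume (A + B) := measure_mono h

lemma bm_one_dim {A B : Set ℝ} (hA : MeasurableSet A) (hB : MeasurableSet B)
    (hAne : A.Nonempty) (hBne : B.Nonempty) :
    volume A + volume B ≤ volume (A + B) := by
  have reindex : ∀ (S : Set ℝ), MeasurableSet S →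
      volume S = ⨆ K : {K : Set ℝ // K ⊆ S ∧ IsCompact K}, volume K.1 := by
    intro S hS
    rw [hS.measure_eq_iSup_isCompact volume]
    apply le_antisymm
    · refine iSup_le fun K => iSup_le fun h1 => iSup_le fun h2 =>
        le_iSup (fun p : {K : Set ℝ // K ⊆ S ∧ IsCompact K} => volume p.1) ⟨K, h1, h2⟩
    · refine iSup_le fun p => ?_
      exact le_iSup_of_le p.1 (le_iSup_of_le p.2.1 (le_iSup_of_le p.2.2 le_rfl))
  haveI hne1 : Nonempty {K : Set ℝ // K ⊆ A ∧ IsCompact K} :=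
    ⟨⟨∅, Set.empty_subset _, isCompact_empty⟩⟩
  haveI hne2 : Nonempty {K : Set ℝ // K ⊆ B ∧ IsCompact K} :=
    ⟨⟨∅, Set.empty_subset _, isCompact_empty⟩⟩
  rw [reindex A hA, reindex B hB, ENNReal.iSup_add]
  refine iSup_le fun K => ?_
  rw [ENNReal.add_iSup]
  refine iSup_le fun L => ?_
  rcases K.1.eq_empty_or_nonempty with hKe | hKne
  · rw [hKe]
    simp only [measure_empty, zero_add]
    calc volume L.1 ≤ volume B := measure_mono L.2.1
      _ ≤ volume (A + B) := vol_le_vol_add_left hAne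
  rcases L.1.eq_empty_or_nonempty with hLe | hLne
  · rw [hLe]
    simp only [measure_empty, add_zero]
    calc volume K.1 ≤ volume A := measure_mono K.2.1
      _ ≤ volume (A + B) := by
          have := vol_le_vol_add_left (A := B) (B := A) hBne
          rwa [add_comm B A] at this
  calc volume K.1 + volume L.1 ≤ volume (K.1 + L.1) := compact_sum_vol K.2.2 L.2.2 hKne hLne
    _ ≤ volume (A + B) := measure_mono (Set.add_subset_add K.2.1 L.2.1)
open scoped ENNReal NNReal

lemma bm_scaled {t : ℝ} (h0 : 0 < t) (h1 : t < 1) {A B S : Set ℝ}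
    (hA : MeasurableSet A) (hB : MeasurableSet B) (hAne : A.Nonempty) (hBne : B.Nonempty)
    (hsub : (1 - t) • A + t • B ⊆ S) :
    ENNReal.ofReal (1 - t) * volume A + ENNReal.ofReal t * volume B ≤ volume S := by
  have hvA : volume ((1 - t) • A) = ENNReal.ofReal (1 - t) * volume A := by
    have := MeasureTheory.Measure.addHaar_smul (volume : Measure ℝ) (1 - t) A
    simpa [abs_of_pos (by linarith : (0:ℝ) < 1 - t)] using this
  have hvB : volume (t • B) = ENNReal.ofReal t * volume B := by
    have := MeasureTheory.Measure.addHaar_smul (volume : Measure ℝ) t B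
    simpa [abs_of_pos h0] using this
  have h1A : MeasurableSet ((1 - t) • A) := hA.const_smul₀ ((1:ℝ) - t)
  have h1B : MeasurableSet (t • B) := hB.const_smul₀ t
  calc ENNReal.ofReal (1 - t) * volume A + ENNReal.ofReal t * volume B
      = volume ((1 - t) • A) + volume (t • B) := by rw [hvA, hvB]
    _ ≤ volume ((1 - t) • A + t • B) :=
        bm_one_dim h1A h1B (hAne.smul_set) (hBne.smul_set)
    _ ≤ volume S := measure_mono hsub

lemma lintegral_Ioi_comp_mul {a : ℝ} (ha : 0 < a) (ψ : ℝ → ℝ≥0∞) (hψ : Measurable ψ) :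
    ∫⁻ u in Ioi (0:ℝ), ψ (a * u) = ENNReal.ofReal a⁻¹ * ∫⁻ v in Ioi (0:ℝ), ψ v := by
  have hmap := Real.map_volume_mul_left (ne_of_gt ha)
  have hind : (Ioi (0:ℝ)).indicator (fun u => ψ (a * u))
      = (fun x => (Ioi (0:ℝ)).indicator ψ x) ∘ (a * ·) := by
    funext u
    by_cases hu : u ∈ Ioi (0:ℝ)
    · have hau : a * u ∈ Ioi (0:ℝ) := by exact mem_Ioi.2 (mul_pos ha (mem_Ioi.1 hu))
      simp [Set.indicator_of_mem hu, Set.indicator_of_mem hau, Function.comp]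
    · have hau : a * u ∉ Ioi (0:ℝ) := by
        simp only [mem_Ioi, not_lt] at hu ⊢
        exact mul_nonpos_of_nonneg_of_nonpos (le_of_lt ha) hu
      simp [Set.indicator_of_notMem hu, Set.indicator_of_notMem hau, Function.comp]
  have hmeas : Measurable ((Ioi (0:ℝ)).indicator ψ) := hψ.indicator measurableSet_Ioi
  calc ∫⁻ u in Ioi (0:ℝ), ψ (a * u)
      = ∫⁻ u, (Ioi (0:ℝ)).indicator (fun u => ψ (a * u)) u := by
        rw [← lintegral_indicator measurableSet_Ioi]
    _ = ∫⁻ u, ((Ioi (0:ℝ)).indicator ψ) (a * u) := by rw [hind]; rfl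
    _ = ∫⁻ x, ((Ioi (0:ℝ)).indicator ψ) x ∂(Measure.map (a * ·) volume) :=
        (lintegral_map hmeas (measurable_const_mul a)).symm
    _ = ENNReal.ofReal |a⁻¹| * ∫⁻ x, ((Ioi (0:ℝ)).indicator ψ) x := by
        rw [hmap]; simp [lintegral_smul_measure]
    _ = ENNReal.ofReal a⁻¹ * ∫⁻ v in Ioi (0:ℝ), ψ v := by
        rw [abs_of_pos (inv_pos.2 ha), lintegral_indicator measurableSet_Ioi]

lemma lintegral_min_layer {α : Type*} [MeasurableSpace α] (μ : Measure α)
    {φ : α → ℝ≥0∞} (hφ : Measurable φ) {c : ℝ≥0∞} (hc : c ≠ ⊤) :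
    ∫⁻ x, min (φ x) c ∂μ = ∫⁻ u in Ioi (0:ℝ), μ {x | ENNReal.ofReal u < min (φ x) c} := by
  have hmin : ∀ x, min (φ x) c ≠ ⊤ := fun x => ne_top_of_le_ne_top hc (min_le_right _ _)
  have hf : ∀ x, ENNReal.ofReal ((min (φ x) c).toReal) = min (φ x) c :=
    fun x => ENNReal.ofReal_toReal (hmin x)
  have hmeas : Measurable fun x => (min (φ x) c).toReal :=
    (hφ.min measurable_const).ennreal_toReal
  have key := lintegral_eq_lintegral_meas_lt μ
    (Filter.Eventually.of_forall fun x => ENNReal.toReal_nonneg)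
    hmeas.aemeasurable
  calc ∫⁻ x, min (φ x) c ∂μ = ∫⁻ x, ENNReal.ofReal ((min (φ x) c).toReal) ∂μ := by
        simp_rw [hf]
    _ = ∫⁻ u in Ioi (0:ℝ), μ {x | u < (min (φ x) c).toReal} := key
    _ = ∫⁻ u in Ioi (0:ℝ), μ {x | ENNReal.ofReal u < min (φ x) c} := by
        apply setLIntegral_congr_fun measurableSet_Ioi
        intro u hu
        dsimp only
        congr 1
        ext x
        simp only [Set.mem_setOf_eq]
        rw [ENNReal.ofReal_lt_iff_lt_toReal (le_of_lt hu) (hmin x)]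

lemma ennreal_geom_mean {t : ℝ} (h0 : 0 < t) (h1 : t < 1) (a b : ℝ≥0∞) :
    a ^ (1 - t) * b ^ t ≤ ENNReal.ofReal (1 - t) * a + ENNReal.ofReal t * b := by
  have h1t : (0:ℝ) < 1 - t := by linarith
  rcases eq_or_ne a ⊤ with rfl | ha
  · rcases eq_or_ne b 0 with rfl | hb
    · simp [ENNReal.zero_rpow_of_pos h0]
    · have : (⊤ : ℝ≥0∞) ^ (1 - t) = ⊤ := ENNReal.top_rpow_of_pos h1t
      rw [this]
      have h2 : ENNReal.ofReal (1 - t) * ⊤ = ⊤ := by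
        rw [ENNReal.mul_top (ENNReal.ofReal_pos.2 h1t).ne']
      rw [h2]
      simp
  rcases eq_or_ne b ⊤ with rfl | hb
  · rcases eq_or_ne a 0 with rfl | ha0
    · simp [ENNReal.zero_rpow_of_pos h1t]
    · have : (⊤ : ℝ≥0∞) ^ t = ⊤ := ENNReal.top_rpow_of_pos h0
      rw [this]
      have h2 : ENNReal.ofReal t * ⊤ = ⊤ := by
        rw [ENNReal.mul_top (ENNReal.ofReal_pos.2 h0).ne']
      rw [h2]
      simp [ENNReal.mul_top', ha]
  lift a to ℝ≥0 using ha
  lift b to ℝ≥0 using hb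
  have w1 : ((1 - t).toNNReal : ℝ) = 1 - t := Real.coe_toNNReal _ (le_of_lt h1t)
  have w2 : ((t).toNNReal : ℝ) = t := Real.coe_toNNReal _ (le_of_lt h0)
  have hw : (1 - t).toNNReal + t.toNNReal = 1 := by
    have : (((1 - t).toNNReal + t.toNNReal : ℝ≥0) : ℝ) = ((1 : ℝ≥0) : ℝ) := by
      push_cast [w1, w2]; ring
    exact_mod_cast this
  have key := NNReal.geom_mean_le_arith_mean2_weighted (1-t).toNNReal t.toNNReal a b hw
  rw [w1, w2] at key
  calc (a : ℝ≥0∞) ^ (1 - t) * (b : ℝ≥0∞) ^ t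
      = ((a ^ (1 - t) * b ^ t : ℝ≥0) : ℝ≥0∞) := by
        rw [ENNReal.coe_mul, ENNReal.coe_rpow_of_nonneg _ (le_of_lt h1t),
          ENNReal.coe_rpow_of_nonneg _ (le_of_lt h0)]
    _ ≤ (((1 - t).toNNReal * a + t.toNNReal * b : ℝ≥0) : ℝ≥0∞) := by
        exact_mod_cast key
    _ = ENNReal.ofReal (1 - t) * a + ENNReal.ofReal t * b := by
        rw [ENNReal.coe_add, ENNReal.coe_mul, ENNReal.coe_mul]
        rw [ENNReal.ofReal, ENNReal.ofReal]

lemma pl_dim1_core {t : ℝ} (ht0 : 0 < t) (ht1 : t < 1) (f g h : ℝ → ℝ≥0∞)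
    (hf : Measurable f) (hg : Measurable g) (hh : Measurable h)
    (hyp : ∀ x y, f x ^ (1 - t) * g y ^ t ≤ h ((1 - t) * x + t * y))
    {c d : ℝ≥0∞} (hc0 : 0 < c) (hcF : c < ⨆ x, f x) (hd0 : 0 < d) (hdG : d < ⨆ y, g y) :
    (∫⁻ x, min (f x) c) ^ (1 - t) * (∫⁻ y, min (g y) d) ^ t ≤ ∫⁻ z, h z := by
  have ht1' : (0:ℝ) < 1 - t := by linarith
  have hcT : c ≠ ⊤ := hcF.ne_top
  have hdT : d ≠ ⊤ := hdG.ne_top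
  set c' := c.toReal with hc'
  set d' := d.toReal with hd'
  have hc'0 : 0 < c' := ENNReal.toReal_pos hc0.ne' hcT
  have hd'0 : 0 < d' := ENNReal.toReal_pos hd0.ne' hdT
  set e' := c' ^ (1 - t) * d' ^ t with he'
  have he'0 : 0 < e' := mul_pos (Real.rpow_pos_of_pos hc'0 _) (Real.rpow_pos_of_pos hd'0 _)
  set e : ℝ≥0∞ := ENNReal.ofReal e' with he
  have heT : e ≠ ⊤ := ENNReal.ofReal_ne_top
  have hoc : ENNReal.ofReal c' = c := ENNReal.ofReal_toReal hcT
  have hod : ENNReal.ofReal d' = d := ENNReal.ofReal_toReal hdT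
  -- the three level-volume functions
  set ψf : ℝ → ℝ≥0∞ := fun v => volume {x | ENNReal.ofReal v < min (f x) c} with hψf
  set ψg : ℝ → ℝ≥0∞ := fun v => volume {y | ENNReal.ofReal v < min (g y) d} with hψg
  set ψh : ℝ → ℝ≥0∞ := fun v => volume {z | ENNReal.ofReal v < min (h z) e} with hψh
  have hanti : ∀ (φ : ℝ → ℝ≥0∞) (m : ℝ≥0∞),
      Antitone (fun v : ℝ => volume {x | ENNReal.ofReal v < min (φ x) m}) := by
    intro φ m v₁ v₂ hv
    exact measure_mono fun x hx => lt_of_le_of_lt (ENNReal.ofReal_le_ofReal hv) hx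
  have hψf_meas : Measurable ψf := (hanti f c).measurable
  have hψg_meas : Measurable ψg := (hanti g d).measurable
  have hψh_meas : Measurable ψh := (hanti h e).measurable
  -- the key level-set inequality
  have key3 : ∀ u ∈ Ioi (0:ℝ),
      ENNReal.ofReal (1 - t) * ψf (c' / e' * u) + ENNReal.ofReal t * ψg (d' / e' * u)
        ≤ ψh u := by
    intro u hu
    rw [mem_Ioi] at hu
    by_cases hue : u < e'
    · -- main case
      have hvf : 0 < c' / e' * u := mul_pos (div_pos hc'0 he'0) hu
      have hvg : 0 < d' / e' * u := mul_pos (div_pos hd'0 he'0) hu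
      have hlf : c' / e' * u < c' := by
        rw [div_mul_eq_mul_div, div_lt_iff₀ he'0]
        nlinarith
      have hlg : d' / e' * u < d' := by
        rw [div_mul_eq_mul_div, div_lt_iff₀ he'0]
        nlinarith
      have hlfc : ENNReal.ofReal (c' / e' * u) < c := by
        rw [← hoc]; exact ENNReal.ofReal_lt_ofReal_iff_of_nonneg (le_of_lt hvf) |>.2 hlf
      have hlgd : ENNReal.ofReal (d' / e' * u) < d := by
        rw [← hod]; exact ENNReal.ofReal_lt_ofReal_iff_of_nonneg (le_of_lt hvg) |>.2 hlg
      set A : Set ℝ := {x | ENNReal.ofReal (c' / e' * u) < f x} with hA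
      set B : Set ℝ := {y | ENNReal.ofReal (d' / e' * u) < g y} with hB
      have hAeq : {x | ENNReal.ofReal (c' / e' * u) < min (f x) c} = A := by
        ext x; simp only [hA, mem_setOf_eq, lt_min_iff, and_iff_left hlfc]
      have hBeq : {y | ENNReal.ofReal (d' / e' * u) < min (g y) d} = B := by
        ext y; simp only [hB, mem_setOf_eq, lt_min_iff, and_iff_left hlgd]
      have hAne : A.Nonempty := lt_iSup_iff.1 (lt_of_lt_of_le hlfc (le_of_lt hcF))
      have hBne : B.Nonempty := lt_iSup_iff.1 (lt_of_lt_of_le hlgd (le_of_lt hdG))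
      have hAmeas : MeasurableSet A := hf measurableSet_Ioi
      have hBmeas : MeasurableSet B := hg measurableSet_Ioi
      have hsub : (1 - t) • A + t • B ⊆ {z | ENNReal.ofReal u < min (h z) e} := by
        rintro z ⟨p, hp, q, hq, rfl⟩
        rcases hp with ⟨x, hx, rfl⟩
        rcases hq with ⟨y, hy, rfl⟩
        rw [mem_setOf_eq, lt_min_iff]
        constructor
        · have h1 : ENNReal.ofReal (c' / e' * u) ^ (1 - t) < f x ^ (1 - t) :=
            ENNReal.rpow_lt_rpow hx ht1'
          have h2 : ENNReal.ofReal (d' / e' * u) ^ t < g y ^ t :=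
            ENNReal.rpow_lt_rpow hy ht0
          have h3 : ENNReal.ofReal (c' / e' * u) ^ (1 - t) * ENNReal.ofReal (d' / e' * u) ^ t
              < f x ^ (1 - t) * g y ^ t := ENNReal.mul_lt_mul h1 h2
          have h4 : ENNReal.ofReal (c' / e' * u) ^ (1 - t) * ENNReal.ofReal (d' / e' * u) ^ t
              = ENNReal.ofReal u := by
            rw [ENNReal.ofReal_rpow_of_pos hvf, ENNReal.ofReal_rpow_of_pos hvg,
              ← ENNReal.ofReal_mul (by positivity)]
            congr 1
            rw [Real.mul_rpow (by positivity) (le_of_lt hu),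
              Real.mul_rpow (by positivity) (le_of_lt hu),
              Real.div_rpow (le_of_lt hc'0) (le_of_lt he'0),
              Real.div_rpow (le_of_lt hd'0) (le_of_lt he'0)]
            have hee : e' ^ (1 - t) * e' ^ t = e' := by
              rw [← Real.rpow_add he'0]; simp
            have huu : u ^ (1 - t) * u ^ t = u := by
              rw [← Real.rpow_add hu]; simp
            field_simp
            calc c' ^ (1-t) * u ^ (1-t) * d' ^ t * u ^ t
                = (c' ^ (1-t) * d' ^ t) * (u ^ (1-t) * u ^ t) := by ring
              _ = e' * u := by rw [huu, ← he']
              _ = e' ^ (1-t) * e' ^ t * u := by rw [hee]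
          calc ENNReal.ofReal u
              = ENNReal.ofReal (c' / e' * u) ^ (1 - t) * ENNReal.ofReal (d' / e' * u) ^ t :=
                h4.symm
            _ < f x ^ (1 - t) * g y ^ t := h3
            _ ≤ h ((1 - t) * x + t * y) := hyp x y
            _ = h ((1 - t) • x + t • y) := by rw [smul_eq_mul, smul_eq_mul]
        · rw [he]
          exact ENNReal.ofReal_lt_ofReal_iff_of_nonneg (le_of_lt hu) |>.2 hue
      have := bm_scaled ht0 ht1 hAmeas hBmeas hAne hBne hsub
      calc ENNReal.ofReal (1 - t) * ψf (c' / e' * u) + ENNReal.ofReal t * ψg (d' / e' * u)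
          = ENNReal.ofReal (1 - t) * volume A + ENNReal.ofReal t * volume B := by
            rw [hψf, hψg]; simp only []; rw [hAeq, hBeq]
        _ ≤ volume {z | ENNReal.ofReal u < min (h z) e} := this
        _ = ψh u := rfl
    · -- degenerate case : both sets empty
      push_neg at hue
      have hef : {x | ENNReal.ofReal (c' / e' * u) < min (f x) c} = ∅ := by
        ext x
        simp only [mem_setOf_eq, mem_empty_iff_false, iff_false, not_lt]
        calc min (f x) c ≤ c := min_le_right _ _
          _ = ENNReal.ofReal c' := hoc.symm
          _ ≤ ENNReal.ofReal (c' / e' * u) := by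
              apply ENNReal.ofReal_le_ofReal
              rw [div_mul_eq_mul_div, le_div_iff₀ he'0]
              nlinarith
      have heg : {y | ENNReal.ofReal (d' / e' * u) < min (g y) d} = ∅ := by
        ext y
        simp only [mem_setOf_eq, mem_empty_iff_false, iff_false, not_lt]
        calc min (g y) d ≤ d := min_le_right _ _
          _ = ENNReal.ofReal d' := hod.symm
          _ ≤ ENNReal.ofReal (d' / e' * u) := by
              apply ENNReal.ofReal_le_ofReal
              rw [div_mul_eq_mul_div, le_div_iff₀ he'0]
              nlinarith
      rw [hψf, hψg]; simp only []
      rw [hef, heg]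
      simp
  -- integrate the level inequality
  have key4 : ENNReal.ofReal (1 - t) * (ENNReal.ofReal (e' / c') * ∫⁻ x, min (f x) c)
      + ENNReal.ofReal t * (ENNReal.ofReal (e' / d') * ∫⁻ y, min (g y) d)
      ≤ ∫⁻ z, h z := by
    have step1 : ∫⁻ u in Ioi (0:ℝ),
        (ENNReal.ofReal (1 - t) * ψf (c' / e' * u) + ENNReal.ofReal t * ψg (d' / e' * u))
        ≤ ∫⁻ u in Ioi (0:ℝ), ψh u :=
      setLIntegral_mono hψh_meas key3
    have step2 : ∫⁻ u in Ioi (0:ℝ),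
        (ENNReal.ofReal (1 - t) * ψf (c' / e' * u) + ENNReal.ofReal t * ψg (d' / e' * u))
        = ENNReal.ofReal (1 - t) * (∫⁻ u in Ioi (0:ℝ), ψf (c' / e' * u))
          + ENNReal.ofReal t * (∫⁻ u in Ioi (0:ℝ), ψg (d' / e' * u)) := by
      rw [lintegral_add_left
        (show Measurable fun u : ℝ => ENNReal.ofReal (1 - t) * ψf (c' / e' * u) from
          (hψf_meas.comp (measurable_const_mul _)).const_mul _)]
      rw [lintegral_const_mul _
          (show Measurable fun u : ℝ => ψf (c' / e' * u) from
            hψf_meas.comp (measurable_const_mul _)),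
        lintegral_const_mul _
          (show Measurable fun u : ℝ => ψg (d' / e' * u) from
            hψg_meas.comp (measurable_const_mul _))]
    have subf : ∫⁻ u in Ioi (0:ℝ), ψf (c' / e' * u)
        = ENNReal.ofReal (e' / c') * ∫⁻ v in Ioi (0:ℝ), ψf v := by
      rw [lintegral_Ioi_comp_mul (div_pos hc'0 he'0) ψf hψf_meas, inv_div]
    have subg : ∫⁻ u in Ioi (0:ℝ), ψg (d' / e' * u)
        = ENNReal.ofReal (e' / d') * ∫⁻ v in Ioi (0:ℝ), ψg v := by
      rw [lintegral_Ioi_comp_mul (div_pos hd'0 he'0) ψg hψg_meas, inv_div]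
    have layf : ∫⁻ v in Ioi (0:ℝ), ψf v = ∫⁻ x, min (f x) c :=
      (lintegral_min_layer volume hf hcT).symm
    have layg : ∫⁻ v in Ioi (0:ℝ), ψg v = ∫⁻ y, min (g y) d :=
      (lintegral_min_layer volume hg hdT).symm
    have layh : ∫⁻ v in Ioi (0:ℝ), ψh v = ∫⁻ z, min (h z) e :=
      (lintegral_min_layer volume hh heT).symm
    have hmin_h : ∫⁻ z, min (h z) e ≤ ∫⁻ z, h z :=
      lintegral_mono fun z => min_le_left _ _
    calc ENNReal.ofReal (1 - t) * (ENNReal.ofReal (e' / c') * ∫⁻ x, min (f x) c)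
        + ENNReal.ofReal t * (ENNReal.ofReal (e' / d') * ∫⁻ y, min (g y) d)
        = ENNReal.ofReal (1 - t) * (∫⁻ u in Ioi (0:ℝ), ψf (c' / e' * u))
          + ENNReal.ofReal t * (∫⁻ u in Ioi (0:ℝ), ψg (d' / e' * u)) := by
          rw [subf, subg, layf, layg]
      _ = ∫⁻ u in Ioi (0:ℝ),
          (ENNReal.ofReal (1 - t) * ψf (c' / e' * u) + ENNReal.ofReal t * ψg (d' / e' * u)) :=
          step2.symm
      _ ≤ ∫⁻ u in Ioi (0:ℝ), ψh u := step1
      _ = ∫⁻ z, min (h z) e := layh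
      _ ≤ ∫⁻ z, h z := hmin_h
  -- conclude by AM-GM
  have hconst : ENNReal.ofReal (e' / c') ^ (1 - t) * ENNReal.ofReal (e' / d') ^ t = 1 := by
    rw [ENNReal.ofReal_rpow_of_pos (div_pos he'0 hc'0),
      ENNReal.ofReal_rpow_of_pos (div_pos he'0 hd'0),
      ← ENNReal.ofReal_mul (by positivity)]
    have : (e' / c') ^ (1 - t) * (e' / d') ^ t = 1 := by
      rw [Real.div_rpow (le_of_lt he'0) (le_of_lt hc'0),
        Real.div_rpow (le_of_lt he'0) (le_of_lt hd'0)]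
      rw [div_mul_div_comm, ← Real.rpow_add he'0]
      simp only [sub_add_cancel, Real.rpow_one]
      rw [← he', div_self (ne_of_gt he'0)]
    rw [this, ENNReal.ofReal_one]
  calc (∫⁻ x, min (f x) c) ^ (1 - t) * (∫⁻ y, min (g y) d) ^ t
      = (ENNReal.ofReal (e' / c') ^ (1 - t) * ENNReal.ofReal (e' / d') ^ t)
        * ((∫⁻ x, min (f x) c) ^ (1 - t) * (∫⁻ y, min (g y) d) ^ t) := by
        rw [hconst, one_mul]
    _ = (ENNReal.ofReal (e' / c') * ∫⁻ x, min (f x) c) ^ (1 - t)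
        * (ENNReal.ofReal (e' / d') * ∫⁻ y, min (g y) d) ^ t := by
        rw [ENNReal.mul_rpow_of_nonneg _ _ (le_of_lt ht1'),
          ENNReal.mul_rpow_of_nonneg _ _ (le_of_lt ht0)]
        ring
    _ ≤ ENNReal.ofReal (1 - t) * (ENNReal.ofReal (e' / c') * ∫⁻ x, min (f x) c)
        + ENNReal.ofReal t * (ENNReal.ofReal (e' / d') * ∫⁻ y, min (g y) d) :=
        ennreal_geom_mean ht0 ht1 _ _
    _ ≤ ∫⁻ z, h z := key4

lemma pl_dim1 {t : ℝ} (ht0 : 0 < t) (ht1 : t < 1) (f g h : ℝ → ℝ≥0∞)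
    (hf : Measurable f) (hg : Measurable g) (hh : Measurable h)
    (hyp : ∀ x y, f x ^ (1 - t) * g y ^ t ≤ h ((1 - t) * x + t * y)) :
    (∫⁻ x, f x) ^ (1 - t) * (∫⁻ y, g y) ^ t ≤ ∫⁻ z, h z := by
  have ht1' : (0:ℝ) < 1 - t := by linarith
  rcases eq_or_ne (∫⁻ x, f x) 0 with hf0 | hf0
  · rw [hf0, ENNReal.zero_rpow_of_pos ht1', zero_mul]; exact zero_le
  rcases eq_or_ne (∫⁻ y, g y) 0 with hg0 | hg0
  · rw [hg0, ENNReal.zero_rpow_of_pos ht0, mul_zero]; exact zero_le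
  have hF : (0:ℝ≥0∞) < ⨆ x, f x := by
    rcases eq_or_ne (⨆ x, f x) 0 with hFe | hFe
    · exfalso
      apply hf0
      have : ∀ x, f x = 0 := fun x =>
        le_antisymm (le_trans (le_iSup f x) (le_of_eq hFe)) zero_le
      simp only [this, lintegral_zero]
    · exact pos_iff_ne_zero.2 hFe
  have hG : (0:ℝ≥0∞) < ⨆ y, g y := by
    rcases eq_or_ne (⨆ y, g y) 0 with hGe | hGe
    · exfalso
      apply hg0
      have : ∀ y, g y = 0 := fun y =>
        le_antisymm (le_trans (le_iSup g y) (le_of_eq hGe)) zero_le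
      simp only [this, lintegral_zero]
    · exact pos_iff_ne_zero.2 hGe
  obtain ⟨u, hu_mono, hu_mem, hu_tendsto⟩ := exists_seq_strictMono_tendsto' hF
  obtain ⟨v, hv_mono, hv_mem, hv_tendsto⟩ := exists_seq_strictMono_tendsto' hG
  have hsupu : ⨆ n, u n = ⨆ x, f x := iSup_eq_of_tendsto hu_mono.monotone hu_tendsto
  have hsupv : ⨆ n, v n = ⨆ y, g y := iSup_eq_of_tendsto hv_mono.monotone hv_tendsto
  have core : ∀ n, (∫⁻ x, min (f x) (u n)) ^ (1 - t) * (∫⁻ y, min (g y) (v n)) ^ t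
      ≤ ∫⁻ z, h z := fun n =>
    pl_dim1_core ht0 ht1 f g h hf hg hh hyp (hu_mem n).1 (hu_mem n).2 (hv_mem n).1 (hv_mem n).2
  have hptwise : ∀ (φ : ℝ → ℝ≥0∞) (w : ℕ → ℝ≥0∞), StrictMono w → (⨆ n, w n = ⨆ x, φ x) →
      ∀ x, (⨆ n, min (φ x) (w n)) = φ x := by
    intro φ w hw hsup x
    by_cases hx : ∃ n, φ x ≤ w n
    · obtain ⟨N, hN⟩ := hx
      apply le_antisymm (iSup_le fun n => min_le_left _ _)
      refine le_iSup_of_le N ?_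
      rw [min_eq_left hN]
    · push_neg at hx
      apply le_antisymm (iSup_le fun n => min_le_left _ _)
      calc φ x ≤ ⨆ x, φ x := le_iSup φ x
        _ = ⨆ n, w n := hsup.symm
        _ = ⨆ n, min (φ x) (w n) := by
            congr 1; funext n; rw [min_eq_right (le_of_lt (hx n))]
  have monf : Monotone fun n => fun x => min (f x) (u n) :=
    fun n m hnm => fun x => min_le_min le_rfl (hu_mono.monotone hnm)
  have mong : Monotone fun n => fun y => min (g y) (v n) :=
    fun n m hnm => fun y => min_le_min le_rfl (hv_mono.monotone hnm)
  have hIf : (⨆ n, ∫⁻ x, min (f x) (u n)) = ∫⁻ x, f x := by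
    rw [← lintegral_iSup (fun n => hf.min measurable_const) monf]
    congr 1
    funext x
    exact hptwise f u hu_mono hsupu x
  have hJg : (⨆ n, ∫⁻ y, min (g y) (v n)) = ∫⁻ y, g y := by
    rw [← lintegral_iSup (fun n => hg.min measurable_const) mong]
    congr 1
    funext y
    exact hptwise g v hv_mono hsupv y
  have hI_t : Filter.Tendsto (fun n => ∫⁻ x, min (f x) (u n)) Filter.atTop
      (nhds (∫⁻ x, f x)) := by
    rw [← hIf]
    exact tendsto_atTop_iSup fun n m hnm => lintegral_mono (monf hnm)
  have hJ_t : Filter.Tendsto (fun n => ∫⁻ y, min (g y) (v n)) Filter.atTop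
      (nhds (∫⁻ y, g y)) := by
    rw [← hJg]
    exact tendsto_atTop_iSup fun n m hnm => lintegral_mono (mong hnm)
  have hI_tp : Filter.Tendsto (fun n => (∫⁻ x, min (f x) (u n)) ^ (1 - t)) Filter.atTop
      (nhds ((∫⁻ x, f x) ^ (1 - t))) :=
    (ENNReal.continuous_rpow_const.tendsto _).comp hI_t
  have hJ_tp : Filter.Tendsto (fun n => (∫⁻ y, min (g y) (v n)) ^ t) Filter.atTop
      (nhds ((∫⁻ y, g y) ^ t)) :=
    (ENNReal.continuous_rpow_const.tendsto _).comp hJ_t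
  have hne1 : (∫⁻ x, f x) ^ (1 - t) ≠ 0 := by
    simp only [ne_eq, ENNReal.rpow_eq_zero_iff, not_or, not_and]
    constructor
    · intro hc; exact absurd hc hf0
    · intro _; linarith
  have hne2 : (∫⁻ y, g y) ^ t ≠ 0 := by
    simp only [ne_eq, ENNReal.rpow_eq_zero_iff, not_or, not_and]
    constructor
    · intro hc; exact absurd hc hg0
    · intro _; linarith
  have hmul : Filter.Tendsto
      (fun n => (∫⁻ x, min (f x) (u n)) ^ (1 - t) * (∫⁻ y, min (g y) (v n)) ^ t)
      Filter.atTop (nhds ((∫⁻ x, f x) ^ (1 - t) * (∫⁻ y, g y) ^ t)) :=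
    ENNReal.Tendsto.mul hI_tp (Or.inl hne1) hJ_tp (Or.inl hne2)
  exact le_of_tendsto hmul (Filter.Eventually.of_forall core)

lemma pl_pi (n : ℕ) {t : ℝ} (ht0 : 0 < t) (ht1 : t < 1)
    (f g h : (Fin n → ℝ) → ℝ≥0∞)
    (hf : Measurable f) (hg : Measurable g) (hh : Measurable h)
    (hyp : ∀ x y, f x ^ (1 - t) * g y ^ t ≤ h ((1 - t) • x + t • y)) :
    (∫⁻ x, f x) ^ (1 - t) * (∫⁻ y, g y) ^ t ≤ ∫⁻ z, h z := by
  induction n with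
  | zero =>
    have huniv : (volume : Measure (Fin 0 → ℝ)) Set.univ = 1 := by
      rw [MeasureTheory.volume_pi, MeasureTheory.Measure.pi_univ]
      simp
    rw [lintegral_unique, lintegral_unique, lintegral_unique, huniv, mul_one, mul_one, mul_one]
    have := hyp default default
    have heq : (1 - t) • (default : Fin 0 → ℝ) + t • default = default := Subsingleton.elim _ _
    rw [heq] at this
    have hd : (@default (Fin 0 → ℝ) Pi.instInhabited) = (@default (Fin 0 → ℝ) Unique.instInhabited) :=
      Subsingleton.elim _ _
    rwa [hd] at this
  | succ n ih =>
    set e := MeasurableEquiv.piFinSuccAbove (fun _ : Fin (n+1) => ℝ) 0 with he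
    have hmp : MeasurePreserving e volume volume :=
      MeasureTheory.volume_preserving_piFinSuccAbove (fun _ : Fin (n+1) => ℝ) 0
    have helin : ∀ (c₁ c₂ : ℝ) (x y : Fin (n+1) → ℝ),
        e (c₁ • x + c₂ • y) = c₁ • e x + c₂ • e y := by
      intro c₁ c₂ x y
      apply Prod.ext
      · simp [he, MeasurableEquiv.piFinSuccAbove_apply]
      · funext j
        simp [he, MeasurableEquiv.piFinSuccAbove_apply, Fin.tail, Pi.add_apply, Pi.smul_apply,
          smul_eq_mul]
    have hslin : ∀ (c₁ c₂ : ℝ) (p q : ℝ × (Fin n → ℝ)),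
        e.symm (c₁ • p + c₂ • q) = c₁ • e.symm p + c₂ • e.symm q := by
      intro c₁ c₂ p q
      apply e.injective
      rw [MeasurableEquiv.apply_symm_apply, helin, MeasurableEquiv.apply_symm_apply,
        MeasurableEquiv.apply_symm_apply]
    set f' : ℝ × (Fin n → ℝ) → ℝ≥0∞ := f ∘ e.symm with hf'def
    set g' : ℝ × (Fin n → ℝ) → ℝ≥0∞ := g ∘ e.symm with hg'def
    set h' : ℝ × (Fin n → ℝ) → ℝ≥0∞ := h ∘ e.symm with hh'def
    have hf' : Measurable f' := hf.comp e.symm.measurable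
    have hg' : Measurable g' := hg.comp e.symm.measurable
    have hh' : Measurable h' := hh.comp e.symm.measurable
    have hyp' : ∀ p q, f' p ^ (1 - t) * g' q ^ t ≤ h' ((1 - t) • p + t • q) := by
      intro p q
      have := hyp (e.symm p) (e.symm q)
      rwa [← hslin] at this
    -- inner integrals
    set F : ℝ → ℝ≥0∞ := fun x₁ => ∫⁻ z, f' (x₁, z) with hFdef
    set G : ℝ → ℝ≥0∞ := fun y₁ => ∫⁻ z, g' (y₁, z) with hGdef
    set H : ℝ → ℝ≥0∞ := fun u => ∫⁻ z, h' (u, z) with hHdef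
    have hFmeas : Measurable F := hf'.lintegral_prod_right'
    have hGmeas : Measurable G := hg'.lintegral_prod_right'
    have hHmeas : Measurable H := hh'.lintegral_prod_right'
    have hypFGH : ∀ x₁ y₁, F x₁ ^ (1 - t) * G y₁ ^ t ≤ H ((1 - t) * x₁ + t * y₁) := by
      intro x₁ y₁
      apply ih (fun z => f' (x₁, z)) (fun z => g' (y₁, z))
        (fun z => h' ((1 - t) * x₁ + t * y₁, z))
        (hf'.comp (measurable_prodMk_left)) (hg'.comp (measurable_prodMk_left))
        (hh'.comp (measurable_prodMk_left))
      intro z w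
      have := hyp' (x₁, z) (y₁, w)
      have heq : (1 - t) • ((x₁, z) : ℝ × (Fin n → ℝ)) + t • (y₁, w)
          = ((1 - t) * x₁ + t * y₁, (1 - t) • z + t • w) := by
        simp [Prod.ext_iff, smul_eq_mul]
      rwa [heq] at this
    have key := pl_dim1 ht0 ht1 F G H hFmeas hGmeas hHmeas hypFGH
    -- identify integrals
    have hint : ∀ (φ : (Fin (n+1) → ℝ) → ℝ≥0∞), Measurable φ →
        ∫⁻ x, φ x = ∫⁻ x₁, ∫⁻ z, (φ ∘ e.symm) (x₁, z) := by
      intro φ hφ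
      have h1 : ∫⁻ x, φ x = ∫⁻ p, (φ ∘ e.symm) p := by
        rw [← hmp.lintegral_comp (hφ.comp e.symm.measurable)]
        congr 1
        funext x
        simp
      rw [h1, MeasureTheory.Measure.volume_eq_prod, lintegral_prod _ ((hφ.comp e.symm.measurable).aemeasurable)]
    rw [hint f hf, hint g hg, hint h hh]
    exact key

lemma pl_euclidean (m : ℕ) {α : ℝ} (h0 : 0 < α) (h1 : α < 1)
    (f g h : EuclideanSpace ℝ (Fin m) → ℝ≥0∞)
    (hf : Measurable f) (hg : Measurable g) (hh : Measurable h)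
    (hyp : ∀ x y, f x ^ α * g y ^ (1 - α) ≤ h (α • x + (1 - α) • y)) :
    (∫⁻ x, f x) ^ α * (∫⁻ y, g y) ^ (1 - α) ≤ ∫⁻ z, h z := by
  have hα : (1:ℝ) - (1 - α) = α := by ring
  set e := (MeasurableEquiv.toLp 2 (Fin m → ℝ)).symm with he
  have hmp : MeasurePreserving e volume volume :=
    EuclideanSpace.volume_preserving_symm_measurableEquiv_toLp (Fin m)
  have hlin : ∀ (c₁ c₂ : ℝ) (p q : Fin m → ℝ),
      e.symm (c₁ • p + c₂ • q) = c₁ • e.symm p + c₂ • e.symm q := by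
    intro c₁ c₂ p q
    rfl
  have key := pl_pi m (by linarith : (0:ℝ) < 1 - α) (by linarith : 1 - α < 1)
    (f ∘ e.symm) (g ∘ e.symm) (h ∘ e.symm)
    (hf.comp e.symm.measurable) (hg.comp e.symm.measurable) (hh.comp e.symm.measurable)
    (by
      intro p q
      rw [hα]
      have := hyp (e.symm p) (e.symm q)
      simp only [Function.comp_apply]
      rwa [← hlin] at this)
  rw [hα] at key
  have hint : ∀ (φ : EuclideanSpace ℝ (Fin m) → ℝ≥0∞), Measurable φ →
      (∫⁻ x, φ x) = ∫⁻ p, (φ ∘ e.symm) p := by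
    intro φ hφ
    rw [← (hmp.symm e).lintegral_comp hφ]
    rfl
  rw [hint f hf, hint g hg, hint h hh]
  exact key

end PLAux

section FinalProof
open scoped ENNReal NNReal

set_option maxHeartbeats 2000000 in
theorem a_log_concavity_preserved_by_partial_gaussian_integration (k m : ℕ) (a : ℝ)
    (ha0 : 0 ≤ a) (ha1 : a ≤ 1)
    (G : EuclideanSpace ℝ (Fin k) × EuclideanSpace ℝ (Fin m) → ℝ)
    (hGmeas : Measurable G) (hGnonneg : ∀ p, 0 ≤ G p)
    (hGbdd : ∃ M : ℝ, ∀ p, G p ≤ M)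
    (hGlogconc : ∀ (p q : EuclideanSpace ℝ (Fin k) × EuclideanSpace ℝ (Fin m)) (α : ℝ),
      0 ≤ α → α ≤ 1 →
      Real.exp (-(a / 2) * (‖(α • p + (1 - α) • q).1‖ ^ 2 + ‖(α • p + (1 - α) • q).2‖ ^ 2)) *
          G (α • p + (1 - α) • q) ≥
        (Real.exp (-(a / 2) * (‖p.1‖ ^ 2 + ‖p.2‖ ^ 2)) * G p) ^ α *
        (Real.exp (-(a / 2) * (‖q.1‖ ^ 2 + ‖q.2‖ ^ 2)) * G q) ^ (1 - α)) :
    ∀ (x y : EuclideanSpace ℝ (Fin k)) (α : ℝ), 0 ≤ α → α ≤ 1 →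
      Real.exp (-(a / 2) * ‖α • x + (1 - α) • y‖ ^ 2) *
          (∫ z, G (α • x + (1 - α) • y, z) ∂stdGaussian m) ≥
        (Real.exp (-(a / 2) * ‖x‖ ^ 2) * ∫ z, G (x, z) ∂stdGaussian m) ^ α *
        (Real.exp (-(a / 2) * ‖y‖ ^ 2) * ∫ z, G (y, z) ∂stdGaussian m) ^ (1 - α) := by
  obtain ⟨M, hM⟩ := hGbdd
  set C : ℝ := (2 * Real.pi) ^ (-(m : ℝ) / 2) with hCdef
  have hCpos : 0 < C := Real.rpow_pos_of_pos (by positivity) _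
  have hPmeas : Measurable (fun z : EuclideanSpace ℝ (Fin m) => C * Real.exp (-‖z‖ ^ 2 / 2)) :=
    (continuous_const.mul (Real.continuous_exp.comp
      (((continuous_norm.pow 2).neg).div_const 2))).measurable
  have hDmeas : Measurable fun z : EuclideanSpace ℝ (Fin m) =>
      ENNReal.ofReal (C * Real.exp (-‖z‖ ^ 2 / 2)) := hPmeas.ennreal_ofReal
  have hmeasG : ∀ w : EuclideanSpace ℝ (Fin k), Measurable fun z => G (w, z) :=
    fun w => hGmeas.comp measurable_prodMk_left
  -- finiteness of the Gaussian measure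
  have hint0 : Integrable (fun v : EuclideanSpace ℝ (Fin m) => Real.exp (-‖v‖ ^ 2 / 2)) := by
    have hc := GaussianFourier.integrable_cexp_neg_mul_sq_norm_add (V := EuclideanSpace ℝ (Fin m))
      (b := (1/2 : ℂ)) (by norm_num) 0 0
    have hnorm := hc.norm
    have heq : (fun v : EuclideanSpace ℝ (Fin m) =>
        ‖Complex.exp (-(1/2 : ℂ) * (‖v‖ : ℂ) ^ 2 + 0 * (inner ℝ 0 v : ℝ))‖)
        = fun v : EuclideanSpace ℝ (Fin m) => Real.exp (-‖v‖ ^ 2 / 2) := by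
      funext v
      rw [Complex.norm_exp]
      congr 1
      have : (-(1/2 : ℂ) * (‖v‖ : ℂ) ^ 2 + 0 * ((inner ℝ 0 v : ℝ) : ℂ)) = ((-‖v‖^2/2 : ℝ) : ℂ) := by
        push_cast
        ring
      rw [this, Complex.ofReal_re]
    rwa [heq] at hnorm
  have hIntP : Integrable (fun z : EuclideanSpace ℝ (Fin m) => C * Real.exp (-‖z‖ ^ 2 / 2)) :=
    hint0.const_mul C
  have hGuniv : stdGaussian m Set.univ < ⊤ := by
    rw [stdGaussian, withDensity_apply _ MeasurableSet.univ, Measure.restrict_univ]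
    exact hIntP.lintegral_lt_top
  have hfin : ∀ w : EuclideanSpace ℝ (Fin k),
      (∫⁻ z, ENNReal.ofReal (G (w, z)) ∂stdGaussian m) ≠ ⊤ := by
    intro w
    have hb : (∫⁻ z, ENNReal.ofReal (G (w, z)) ∂stdGaussian m)
        ≤ ∫⁻ _, ENNReal.ofReal M ∂stdGaussian m :=
      lintegral_mono fun z => ENNReal.ofReal_le_ofReal (hM _)
    rw [lintegral_const] at hb
    exact ne_top_of_le_ne_top (ENNReal.mul_ne_top ENNReal.ofReal_ne_top hGuniv.ne) hb
  have hR : ∀ w : EuclideanSpace ℝ (Fin k), ∫ z, G (w, z) ∂stdGaussian m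
      = (∫⁻ z, ENNReal.ofReal (G (w, z)) ∂stdGaussian m).toReal := fun w =>
    integral_eq_lintegral_of_nonneg_ae (Filter.Eventually.of_forall fun z => hGnonneg _)
      ((hmeasG w).aestronglyMeasurable)
  intro x y α hα0 hα1
  rcases eq_or_lt_of_le hα0 with hα0' | hα0'
  · -- α = 0
    rw [← hα0']
    simp only [zero_smul, sub_zero, one_smul, zero_add, Real.rpow_zero, Real.rpow_one, one_mul]
    exact le_rfl
  rcases eq_or_lt_of_le hα1 with hα1' | hα1'
  · -- α = 1
    subst hα1'
    simp only [one_smul, sub_self, zero_smul, add_zero, Real.rpow_zero, Real.rpow_one, mul_one]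
    exact le_rfl
  -- main case
  have hα2 : (0:ℝ) < 1 - α := by linarith
  set xα := α • x + (1 - α) • y with hxα
  set Ψ : EuclideanSpace ℝ (Fin k) → EuclideanSpace ℝ (Fin m) → ℝ≥0∞ := fun w z =>
    ENNReal.ofReal ((C * Real.exp (-‖z‖ ^ 2 / 2))
      * (Real.exp (-(a / 2) * ‖w‖ ^ 2) * G (w, z))) with hΨdef
  have hΨmeas : ∀ w, Measurable (Ψ w) := fun w =>
    (hPmeas.mul ((hmeasG w).const_mul _)).ennreal_ofReal
  -- pointwise hypothesis for Prékopa–Leindler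
  have hyp_pl : ∀ z w', Ψ x z ^ α * Ψ y w' ^ (1 - α) ≤ Ψ xα (α • z + (1 - α) • w') := by
    intro z w'
    set zα := α • z + (1 - α) • w' with hzα
    have hGxz : 0 ≤ G (x, z) := hGnonneg _
    have hGyw : 0 ≤ G (y, w') := hGnonneg _
    have hb1 : 0 ≤ (C * Real.exp (-‖z‖ ^ 2 / 2)) * (Real.exp (-(a / 2) * ‖x‖ ^ 2) * G (x, z)) :=
      mul_nonneg (by positivity) (mul_nonneg (Real.exp_nonneg _) hGxz)
    have hb2 : 0 ≤ (C * Real.exp (-‖w'‖ ^ 2 / 2)) * (Real.exp (-(a / 2) * ‖y‖ ^ 2) * G (y, w')) :=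
      mul_nonneg (by positivity) (mul_nonneg (Real.exp_nonneg _) hGyw)
    rw [hΨdef]
    simp only []
    rw [ENNReal.ofReal_rpow_of_nonneg hb1 hα0'.le, ENNReal.ofReal_rpow_of_nonneg hb2 hα2.le,
      ← ENNReal.ofReal_mul (Real.rpow_nonneg hb1 _)]
    apply ENNReal.ofReal_le_ofReal
    -- now a real inequality
    have decomp : ∀ (w : EuclideanSpace ℝ (Fin k)) (z' : EuclideanSpace ℝ (Fin m)),
        (C * Real.exp (-‖z'‖ ^ 2 / 2)) * (Real.exp (-(a / 2) * ‖w‖ ^ 2) * G (w, z'))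
        = C * (Real.exp (-((1 - a) / 2) * ‖z'‖ ^ 2)
            * (Real.exp (-(a / 2) * (‖w‖ ^ 2 + ‖z'‖ ^ 2)) * G (w, z'))) := by
      intro w z'
      have hexp : Real.exp (-‖z'‖ ^ 2 / 2) * Real.exp (-(a / 2) * ‖w‖ ^ 2)
          = Real.exp (-((1 - a) / 2) * ‖z'‖ ^ 2) * Real.exp (-(a / 2) * (‖w‖ ^ 2 + ‖z'‖ ^ 2)) := by
        rw [← Real.exp_add, ← Real.exp_add]
        congr 1
        ring
      calc (C * Real.exp (-‖z'‖ ^ 2 / 2)) * (Real.exp (-(a / 2) * ‖w‖ ^ 2) * G (w, z'))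
          = C * ((Real.exp (-‖z'‖ ^ 2 / 2) * Real.exp (-(a / 2) * ‖w‖ ^ 2)) * G (w, z')) := by
            ring
        _ = C * ((Real.exp (-((1 - a) / 2) * ‖z'‖ ^ 2)
              * Real.exp (-(a / 2) * (‖w‖ ^ 2 + ‖z'‖ ^ 2))) * G (w, z')) := by rw [hexp]
        _ = C * (Real.exp (-((1 - a) / 2) * ‖z'‖ ^ 2)
              * (Real.exp (-(a / 2) * (‖w‖ ^ 2 + ‖z'‖ ^ 2)) * G (w, z'))) := by ring
    rw [decomp x z, decomp y w', decomp xα zα]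
    -- abbreviations
    set Uz := Real.exp (-((1 - a) / 2) * ‖z‖ ^ 2) with hUz
    set Uw := Real.exp (-((1 - a) / 2) * ‖w'‖ ^ 2) with hUw
    set Uc := Real.exp (-((1 - a) / 2) * ‖zα‖ ^ 2) with hUc
    set Px := Real.exp (-(a / 2) * (‖x‖ ^ 2 + ‖z‖ ^ 2)) * G (x, z) with hPx
    set Py := Real.exp (-(a / 2) * (‖y‖ ^ 2 + ‖w'‖ ^ 2)) * G (y, w') with hPy
    set Pc := Real.exp (-(a / 2) * (‖xα‖ ^ 2 + ‖zα‖ ^ 2)) * G (xα, zα) with hPc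
    have hUzpos : 0 < Uz := Real.exp_pos _
    have hUwpos : 0 < Uw := Real.exp_pos _
    have hUcpos : 0 < Uc := Real.exp_pos _
    have hPxnn : 0 ≤ Px := mul_nonneg (Real.exp_nonneg _) hGxz
    have hPynn : 0 ≤ Py := mul_nonneg (Real.exp_nonneg _) hGyw
    -- log-concavity hypothesis
    have hΦ : Px ^ α * Py ^ (1 - α) ≤ Pc := by
      have hcomb : α • ((x, z) : EuclideanSpace ℝ (Fin k) × EuclideanSpace ℝ (Fin m))
          + (1 - α) • (y, w') = (xα, zα) := rfl
      have h := hGlogconc (x, z) (y, w') α hα0 hα1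
      rw [hcomb] at h
      exact h
    -- norm convexity
    have hnorm1 : ‖zα‖ ≤ α * ‖z‖ + (1 - α) * ‖w'‖ := by
      calc ‖zα‖ ≤ ‖α • z‖ + ‖(1 - α) • w'‖ := norm_add_le _ _
        _ = α * ‖z‖ + (1 - α) * ‖w'‖ := by
            rw [norm_smul, norm_smul, Real.norm_eq_abs, Real.norm_eq_abs,
              abs_of_pos hα0', abs_of_pos hα2]
    have hnormsq : ‖zα‖ ^ 2 ≤ α * ‖z‖ ^ 2 + (1 - α) * ‖w'‖ ^ 2 := by
      have h2 : ‖zα‖ ^ 2 ≤ (α * ‖z‖ + (1 - α) * ‖w'‖) ^ 2 :=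
        pow_le_pow_left₀ (norm_nonneg _) hnorm1 2
      nlinarith [sq_nonneg (‖z‖ - ‖w'‖), mul_nonneg (mul_nonneg hα0'.le hα2.le)
        (sq_nonneg (‖z‖ - ‖w'‖))]
    -- the U part
    have hUU : Uz ^ α * Uw ^ (1 - α) ≤ Uc := by
      rw [hUz, hUw, hUc, ← Real.exp_mul, ← Real.exp_mul, ← Real.exp_add, Real.exp_le_exp]
      have hkey := mul_le_mul_of_nonneg_left hnormsq (by linarith : (0:ℝ) ≤ (1 - a) / 2)
      nlinarith [hkey]
    -- the constant part
    have hCC : C ^ α * C ^ (1 - α) = C := by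
      rw [← Real.rpow_add hCpos]
      norm_num
    -- combine
    have e1 : (C * (Uz * Px)) ^ α = C ^ α * (Uz ^ α * Px ^ α) := by
      rw [Real.mul_rpow hCpos.le (mul_nonneg hUzpos.le hPxnn),
        Real.mul_rpow hUzpos.le hPxnn]
    have e2 : (C * (Uw * Py)) ^ (1 - α) = C ^ (1 - α) * (Uw ^ (1 - α) * Py ^ (1 - α)) := by
      rw [Real.mul_rpow hCpos.le (mul_nonneg hUwpos.le hPynn),
        Real.mul_rpow hUwpos.le hPynn]
    calc (C * (Uz * Px)) ^ α * (C * (Uw * Py)) ^ (1 - α)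
        = (C ^ α * C ^ (1 - α)) * ((Uz ^ α * Uw ^ (1 - α)) * (Px ^ α * Py ^ (1 - α))) := by
          rw [e1, e2]; ring
      _ = C * ((Uz ^ α * Uw ^ (1 - α)) * (Px ^ α * Py ^ (1 - α))) := by rw [hCC]
      _ ≤ C * (Uc * Pc) := by
          apply mul_le_mul_of_nonneg_left _ hCpos.le
          apply mul_le_mul hUU hΦ
            (mul_nonneg (Real.rpow_nonneg hPxnn _) (Real.rpow_nonneg hPynn _)) hUcpos.le
  -- apply Prékopa–Leindler
  have key := pl_euclidean m hα0' hα1' (Ψ x) (Ψ y) (Ψ xα)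
    (hΨmeas x) (hΨmeas y) (hΨmeas xα) hyp_pl
  -- identify the integrals
  have hL : ∀ w : EuclideanSpace ℝ (Fin k), (∫⁻ z, Ψ w z)
      = ENNReal.ofReal (Real.exp (-(a / 2) * ‖w‖ ^ 2))
        * ∫⁻ z, ENNReal.ofReal (G (w, z)) ∂stdGaussian m := by
    intro w
    rw [stdGaussian, lintegral_withDensity_eq_lintegral_mul volume hDmeas
      (hmeasG w).ennreal_ofReal]
    simp only [Pi.mul_apply]
    rw [← lintegral_const_mul _ (show Measurable fun z => ENNReal.ofReal (C * Real.exp (-‖z‖ ^ 2 / 2)) * ENNReal.ofReal (G (w, z)) from hDmeas.mul (hmeasG w).ennreal_ofReal)]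
    congr 1
    funext z
    rw [hΨdef]
    simp only [Pi.mul_apply]
    rw [ENNReal.ofReal_mul (by positivity), ENNReal.ofReal_mul (Real.exp_nonneg _)]
    ring
  rw [hL x, hL y, hL xα] at key
  -- convert to real
  rw [ge_iff_le, hR x, hR y, hR xα]
  have hcv : ∀ w : EuclideanSpace ℝ (Fin k),
      Real.exp (-(a / 2) * ‖w‖ ^ 2) * (∫⁻ z, ENNReal.ofReal (G (w, z)) ∂stdGaussian m).toReal
      = (ENNReal.ofReal (Real.exp (-(a / 2) * ‖w‖ ^ 2))
          * ∫⁻ z, ENNReal.ofReal (G (w, z)) ∂stdGaussian m).toReal := by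
    intro w
    rw [ENNReal.toReal_mul, ENNReal.toReal_ofReal (Real.exp_nonneg _)]
  rw [hcv x, hcv y, hcv xα]
  rw [ENNReal.toReal_rpow, ENNReal.toReal_rpow, ← ENNReal.toReal_mul]
  apply ENNReal.toReal_mono
  · exact ENNReal.mul_ne_top ENNReal.ofReal_ne_top (hfin xα)
  · exact key

end FinalProof
end

section
/- Let P be a probability measure and f a bounded nonnegative measurable function. Then E_P[f (log f − log E_P[f])] = inf_{x>0} E_P[f log(f/x) − (f − x)]. -/
open MeasureTheory Set

theorem holley_stroock_variational_identity {α : Type*} [MeasurableSpace α]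
    (P : Measure α) [IsProbabilityMeasure P]
    (f : α → ℝ) (hf_meas : Measurable f) (hf_nonneg : ∀ a, 0 ≤ f a)
    (hf_bdd : ∃ M : ℝ, ∀ a, f a ≤ M) :
    ∫ a, f a * (Real.log (f a) - Real.log (∫ b, f b ∂P)) ∂P =
      ⨅ x : Set.Ioi (0 : ℝ),
        ∫ a, (f a * Real.log (f a / (x : ℝ)) - (f a - (x : ℝ))) ∂P := by
  obtain ⟨M, hM⟩ := hf_bdd
  set m : ℝ := ∫ b, f b ∂P with hm
  -- integrability of f
  have hint_f : Integrable f P := by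
    refine (integrable_const M).mono' hf_meas.aestronglyMeasurable ?_
    filter_upwards with a
    rw [Real.norm_eq_abs, abs_of_nonneg (hf_nonneg a)]
    exact hM a
  -- integrability of f log f
  obtain ⟨K, hK⟩ := (isCompact_Icc (a := (0:ℝ)) (b := M)).exists_bound_of_continuousOn
    Real.continuous_mul_log.continuousOn
  have hint_flog : Integrable (fun a => f a * Real.log (f a)) P := by
    refine (integrable_const K).mono'
      ((Real.continuous_mul_log.measurable.comp hf_meas).aestronglyMeasurable) ?_
    filter_upwards with a
    exact hK (f a) ⟨hf_nonneg a, hM a⟩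
  set C : ℝ := ∫ a, f a * Real.log (f a) ∂P with hC
  have hm_nonneg : 0 ≤ m := integral_nonneg hf_nonneg
  -- key computation of each integral inside the infimum
  have key : ∀ x : ℝ, 0 < x →
      ∫ a, (f a * Real.log (f a / x) - (f a - x)) ∂P = C - m * Real.log x - m + x := by
    intro x hx
    have hpt : ∀ a, f a * Real.log (f a / x) - (f a - x)
        = (f a * Real.log (f a) - Real.log x * f a) - (f a - x) := by
      intro a
      rcases eq_or_lt_of_le (hf_nonneg a) with h | h
      · simp [← h]
      · rw [Real.log_div (ne_of_gt h) (ne_of_gt hx)]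
        ring
    simp only [hpt]
    have h1 : Integrable (fun a => f a * Real.log (f a) - Real.log x * f a) P :=
      hint_flog.sub (hint_f.const_mul _)
    have h2 : Integrable (fun a => f a - x) P := hint_f.sub (integrable_const x)
    rw [integral_sub h1 h2, integral_sub hint_flog (hint_f.const_mul _),
      integral_sub hint_f (integrable_const x), integral_const_mul, integral_const]
    simp
    ring
  -- compute the LHS
  have hlhs : ∫ a, f a * (Real.log (f a) - Real.log m) ∂P = C - m * Real.log m := by
    have hpt : ∀ a, f a * (Real.log (f a) - Real.log m)
        = f a * Real.log (f a) - Real.log m * f a := by intro a; ring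
    simp only [hpt]
    rw [integral_sub hint_flog (hint_f.const_mul (Real.log m)), integral_const_mul]
    ring
  rw [hlhs]
  -- lower bound: C - m log m ≤ each term
  have hlb : ∀ x : Set.Ioi (0 : ℝ),
      C - m * Real.log m ≤ ∫ a, (f a * Real.log (f a / (x : ℝ)) - (f a - (x : ℝ))) ∂P := by
    rintro ⟨x, hx⟩
    rw [Set.mem_Ioi] at hx
    simp only
    rw [key x hx]
    rcases eq_or_lt_of_le hm_nonneg with h | h
    · simp only [← h]
      simp
      linarith
    · have hlog : Real.log (x / m) ≤ x / m - 1 :=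
        Real.log_le_sub_one_of_pos (div_pos hx h)
      rw [Real.log_div (ne_of_gt hx) (ne_of_gt h)] at hlog
      have := mul_le_mul_of_nonneg_left hlog (le_of_lt h)
      rw [mul_sub, mul_sub, mul_div_cancel₀ _ (ne_of_gt h)] at this
      linarith
  refine le_antisymm (le_ciInf hlb) ?_
  have hbdd : BddBelow (Set.range fun x : Set.Ioi (0 : ℝ) =>
      ∫ a, (f a * Real.log (f a / (x : ℝ)) - (f a - (x : ℝ))) ∂P) := by
    refine ⟨C - m * Real.log m, ?_⟩
    rintro y ⟨x, rfl⟩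
    exact hlb x
  rcases eq_or_lt_of_le hm_nonneg with h | h
  · -- m = 0
    refine le_of_forall_sub_le fun ε hε => ?_
    have := ciInf_le hbdd (⟨ε, hε⟩ : Set.Ioi (0 : ℝ))
    rw [key ε hε] at this
    simp only [← h] at this ⊢
    simp at this ⊢
    linarith
  · have := ciInf_le hbdd (⟨m, h⟩ : Set.Ioi (0 : ℝ))
    rw [key m h] at this
    linarith
end
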